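/- arXiv:1803.06623 — 3 statements merged into one kernel-verified Lean document; each statement's English description precedes it below -/
import Mathlib

section
/- For n ≥ 1 and 1 ≤ p < ∞, the norm on S_n^p given by ‖f‖ = ‖f‖_{H^p} + ‖f'‖_{H^p} + ⋯ + ‖f^{(n)}‖_{H^p} is equivalent to the recursively defined norm ‖f‖_{S_n^p} = |f(0)| + ‖f'‖_{S_{n-1}^p}. -/
open MeasureTheory Metric Set Filter

/-- The Hardy space `p`-norm on the unit disk (as an extended real). -/
noncomputable def hardyNorm (p : ℝ) (f : ℂ → ℂ) : ENNReal :=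
  ⨆ r : Set.Ioo (0:ℝ) 1,
    ((∫⁻ θ in Set.Ioc (0:ℝ) (2*Real.pi),
        ENNReal.ofReal (‖f ((r:ℝ) * Complex.exp (θ * Complex.I))‖ ^ p)) /
      ENNReal.ofReal (2*Real.pi)) ^ (1/p)

/-- Sup norm over the unit disk. -/
noncomputable def supNorm (f : ℂ → ℂ) : ENNReal :=
  ⨆ z ∈ Metric.ball (0:ℂ) 1, ENNReal.ofReal ‖f z‖

/-- The recursively defined norm of `S_n^p`: `‖f‖_{S_n^p} = |f 0| + ‖f'‖_{S_{n-1}^p}`. -/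
noncomputable def snNorm : ℕ → ℝ → (ℂ → ℂ) → ENNReal
  | 0, p, f => hardyNorm p f
  | n+1, p, f => ENNReal.ofReal ‖f 0‖ + snNorm n p (deriv f)

/-- Membership in the Hardy space `H^p` of the unit disk. -/
def MemHp (p : ℝ) (f : ℂ → ℂ) : Prop :=
  DifferentiableOn ℂ f (Metric.ball 0 1) ∧ hardyNorm p f < ⊤

/-- Membership in `S_n^p`: analytic on the disk with `n`-th derivative in `H^p`. -/
def MemS (n : ℕ) (p : ℝ) (f : ℂ → ℂ) : Prop :=
  DifferentiableOn ℂ f (Metric.ball 0 1) ∧ hardyNorm p (iteratedDeriv n f) < ⊤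

/-- Membership in `S_{n,0}^p`: members of `S_n^p` whose first `n` Taylor coefficients vanish. -/
def MemS0 (n : ℕ) (p : ℝ) (f : ℂ → ℂ) : Prop :=
  MemS n p f ∧ ∀ m < n, iteratedDeriv m f 0 = 0

/-- `(V_n f)(z) = (1/(n-1)!) ∫_0^z (z-ζ)^{n-1} f(ζ) dζ`, along the segment `ζ = t z`. -/
noncomputable def Vop (n : ℕ) (f : ℂ → ℂ) (z : ℂ) : ℂ :=
  (1 / (Nat.factorial (n-1) : ℂ)) *
    ∫ t in (0:ℝ)..1, z * (z - (t:ℂ) * z) ^ (n-1) * f ((t:ℂ) * z)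

/-- The Volterra operator `(T_z f)(z) = ∫_0^z f(ω) dω` along the segment. -/
noncomputable def Volterra (f : ℂ → ℂ) (z : ℂ) : ℂ :=
  ∫ t in (0:ℝ)..1, z * f ((t:ℂ) * z)

open Complex


lemma jensen_avg {μ : Measure ℝ} {F : ℝ → ENNReal} (hF : AEMeasurable F μ) {c : ENNReal}
    (hc : μ univ = c) (hc0 : c ≠ 0) (hct : c ≠ ⊤) {p : ℝ} (hp : 1 ≤ p) :
    (∫⁻ x, F x ∂μ) / c ≤ ((∫⁻ x, F x ^ p ∂μ) / c) ^ (1/p) := by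
  rcases eq_or_lt_of_le hp with h1 | h1
  · subst h1; simp
  set q : ℝ := p / (p - 1) with hq
  have hpq : p.HolderConjugate q := Real.HolderConjugate.conjExponent h1
  have hhold := ENNReal.lintegral_mul_le_Lp_mul_Lq μ hpq hF (aemeasurable_const (b := (1:ENNReal)))
  simp only [Pi.mul_apply, mul_one, ENNReal.one_rpow, lintegral_const, hc, one_mul] at hhold
  have hcq : c ^ (1/q) = c / c ^ (1/p) := by
    rw [show (1/q : ℝ) = 1 - 1/p by
      have := hpq.inv_add_inv_eq_one; rw [inv_eq_one_div, inv_eq_one_div] at this; linarith]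
    rw [ENNReal.rpow_sub _ _ hc0 hct, ENNReal.rpow_one]
  rw [ENNReal.div_rpow_of_nonneg _ _ (by positivity), ENNReal.div_le_iff hc0 hct]
  calc (∫⁻ x, F x ∂μ) ≤ (∫⁻ x, F x ^ p ∂μ) ^ (1/p) * c ^ (1/q) := hhold
    _ = (∫⁻ x, F x ^ p ∂μ) ^ (1/p) / c ^ (1/p) * c := by
        rw [hcq]; simp only [div_eq_mul_inv]; ring

lemma mean_value {g : ℂ → ℂ} (hg : DifferentiableOn ℂ g (ball 0 1)) {r : ℝ}
    (hr0 : 0 < r) (hr1 : r < 1) :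
    g 0 = (2*Real.pi : ℂ)⁻¹ * ∫ θ in (0:ℝ)..(2*Real.pi), g (r * Complex.exp (θ * Complex.I)) := by
  have hd : DifferentiableOn ℂ g (closedBall 0 r) := hg.mono (closedBall_subset_ball hr1)
  have h := hd.circleIntegral_sub_inv_smul (w := 0) (mem_ball_self hr0)
  have hne : ∀ θ : ℝ, (r : ℂ) * Complex.exp (θ * Complex.I) ≠ 0 := by
    intro θ
    exact mul_ne_zero (by exact_mod_cast hr0.ne') (Complex.exp_ne_zero _)
  have h2 : (∮ z in C(0, r), (z - 0)⁻¹ • g z)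
      = Complex.I * ∫ θ in (0:ℝ)..(2*Real.pi), g (r * Complex.exp (θ * Complex.I)) := by
    rw [circleIntegral, ← intervalIntegral.integral_const_mul]
    refine intervalIntegral.integral_congr fun θ _ => ?_
    simp only [deriv_circleMap, circleMap_zero, sub_zero, smul_eq_mul]
    field_simp [hne θ]
    have hr : (r:ℂ) ≠ 0 := by exact_mod_cast hr0.ne'
    field_simp
  rw [h2] at h
  have hIne : (2 * Real.pi * Complex.I : ℂ) ≠ 0 := by
    simp [Real.pi_ne_zero, Complex.I_ne_zero]
  field_simp at h ⊢
  have h4 : (∫ θ in (0:ℝ)..(2*Real.pi), g (r * Complex.exp (Complex.I * θ)))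
      = 2*(Real.pi:ℂ) * g 0 := mul_left_cancel₀ Complex.I_ne_zero (by rw [h, smul_eq_mul]; ring)
  rw [h4]

lemma cont_aux {g : ℂ → ℂ} (hg : DifferentiableOn ℂ g (ball 0 1)) {r : ℝ}
    (hr1 : |r| < 1) : Continuous fun θ : ℝ => g ((r:ℂ) * Complex.exp (θ * Complex.I)) := by
  apply hg.continuousOn.comp_continuous (by continuity)
  intro θ
  rw [mem_ball_zero_iff]
  simp only [norm_mul, Real.norm_eq_abs, Complex.norm_real, Complex.norm_exp_ofReal_mul_I,
    mul_one]
  exact hr1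

lemma pointA {g : ℂ → ℂ} (hg : DifferentiableOn ℂ g (ball 0 1)) {r : ℝ}
    (hr0 : 0 < r) (hr1 : r < 1) {p : ℝ} (hp : 1 ≤ p) :
    ENNReal.ofReal (‖g 0‖) ≤
      ((∫⁻ θ in Set.Ioc (0:ℝ) (2*Real.pi),
        ENNReal.ofReal (‖g ((r:ℝ) * Complex.exp (θ * Complex.I))‖ ^ p)) /
      ENNReal.ofReal (2*Real.pi)) ^ (1/p) := by
  have hπ : (0:ℝ) < 2*Real.pi := by positivity
  have hcont : Continuous fun θ : ℝ => g ((r:ℂ) * Complex.exp (θ * Complex.I)) :=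
    cont_aux hg (by rw [abs_of_pos hr0]; exact hr1)
  -- step 1: |g 0| bounded by the average of |g| on the circle
  have h1 : ENNReal.ofReal (‖g 0‖) ≤
      (∫⁻ θ in Set.Ioc (0:ℝ) (2*Real.pi),
        ENNReal.ofReal (‖g ((r:ℝ) * Complex.exp (θ * Complex.I))‖)) /
      ENNReal.ofReal (2*Real.pi) := by
    rw [mean_value hg hr0 hr1]
    rw [ENNReal.le_div_iff_mul_le (by simp [ENNReal.ofReal_pos, hπ, Real.pi_pos]) (by simp [ENNReal.mul_eq_top])]
    calc ENNReal.ofReal (‖(2*Real.pi : ℂ)⁻¹ *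
          ∫ θ in (0:ℝ)..(2*Real.pi), g (r * Complex.exp (θ * Complex.I))‖) *
          ENNReal.ofReal (2*Real.pi)
        = ENNReal.ofReal (‖∫ θ in (0:ℝ)..(2*Real.pi), g (r * Complex.exp (θ * Complex.I))‖) := by
          rw [norm_mul, ENNReal.ofReal_mul (by positivity)]
          have : ‖(2*Real.pi : ℂ)⁻¹‖ = (2*Real.pi)⁻¹ := by
            rw [norm_inv]; norm_cast
            simp [Complex.norm_real, abs_of_pos hπ, Real.pi_pos.le]
          rw [this, mul_comm (ENNReal.ofReal (2*Real.pi)⁻¹), mul_assoc,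
            ← ENNReal.ofReal_mul (by positivity), inv_mul_cancel₀ hπ.ne']
          simp
      _ ≤ ∫⁻ θ in Set.Ioc (0:ℝ) (2*Real.pi),
            ENNReal.ofReal (‖g ((r:ℝ) * Complex.exp (θ * Complex.I))‖) := by
          rw [intervalIntegral.integral_of_le (by positivity)]
          rw [show ENNReal.ofReal (‖∫ θ in Set.Ioc (0:ℝ) (2*Real.pi), g ((r:ℝ) * Complex.exp (θ * Complex.I))‖) = ((‖∫ θ in Set.Ioc (0:ℝ) (2*Real.pi), g ((r:ℝ) * Complex.exp (θ * Complex.I))‖ₑ : ENNReal)) from by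
            rw [ofReal_norm]]
          refine (enorm_integral_le_lintegral_enorm _).trans (le_of_eq ?_)
          refine lintegral_congr fun θ => ?_
          rw [ofReal_norm]
  refine h1.trans ?_
  have hmeas : AEMeasurable (fun θ : ℝ => ENNReal.ofReal (‖g ((r:ℝ) * Complex.exp (θ * Complex.I))‖))
      (volume.restrict (Set.Ioc (0:ℝ) (2*Real.pi))) :=
    ((ENNReal.continuous_ofReal.comp (continuous_norm.comp hcont)).measurable).aemeasurable
  have hc : (volume.restrict (Set.Ioc (0:ℝ) (2*Real.pi))) univ = ENNReal.ofReal (2*Real.pi) := by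
    simp [Real.volume_Ioc]
  have h2 := jensen_avg hmeas hc (ENNReal.ofReal_pos.mpr hπ).ne'
    ENNReal.ofReal_ne_top hp
  have hint : (∫⁻ θ in Set.Ioc (0:ℝ) (2*Real.pi),
      ENNReal.ofReal (‖g ((r:ℝ) * Complex.exp (θ * Complex.I))‖ ^ p))
      = ∫⁻ θ in Set.Ioc (0:ℝ) (2*Real.pi),
        (ENNReal.ofReal (‖g ((r:ℝ) * Complex.exp (θ * Complex.I))‖)) ^ p :=
    lintegral_congr fun θ => (ENNReal.ofReal_rpow_of_nonneg (norm_nonneg _) (by positivity)).symm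
  rw [hint]
  exact h2

lemma ftc_seg {g : ℂ → ℂ} (hg : DifferentiableOn ℂ g (ball 0 1))
    (hg' : ContinuousOn (deriv g) (ball 0 1)) {w : ℂ} (hw : w ∈ ball (0:ℂ) 1) :
    g w = g 0 + ∫ t in (0:ℝ)..1, w * deriv g ((t:ℂ) * w) := by
  have hmem : ∀ t : ℝ, t ∈ Set.Icc (0:ℝ) 1 → (t:ℂ) * w ∈ ball (0:ℂ) 1 := by
    intro t ht
    rw [mem_ball_zero_iff] at *
    calc ‖(t:ℂ) * w‖ = |t| * ‖w‖ := by simp [Complex.norm_real]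
      _ ≤ 1 * ‖w‖ := by
          apply mul_le_mul_of_nonneg_right _ (norm_nonneg _)
          rw [_root_.abs_of_nonneg ht.1]; exact ht.2
      _ < 1 := by rw [one_mul]; exact hw
  have hderiv : ∀ t ∈ Set.uIcc (0:ℝ) 1,
      HasDerivAt (fun t : ℝ => g ((t:ℂ) * w)) (w * deriv g ((t:ℂ) * w)) t := by
    intro t ht
    rw [Set.uIcc_of_le zero_le_one] at ht
    have hu : HasDerivAt (fun z : ℂ => z * w) w (t:ℂ) := by
      simpa using (hasDerivAt_id (t:ℂ)).mul_const w
    have h2 : HasDerivAt g (deriv g ((t:ℂ) * w)) ((t:ℂ) * w) :=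
      (hg.differentiableAt (isOpen_ball.mem_nhds (hmem t ht))).hasDerivAt
    have := (h2.comp (t:ℂ) hu).comp_ofReal
    simpa [mul_comm] using this
  have hint : IntervalIntegrable (fun t : ℝ => w * deriv g ((t:ℂ) * w)) volume 0 1 := by
    apply ContinuousOn.intervalIntegrable
    rw [Set.uIcc_of_le zero_le_one]
    exact continuousOn_const.mul (hg'.comp (by continuity : Continuous fun t : ℝ => (t:ℂ)*w).continuousOn hmem)
  have := intervalIntegral.integral_eq_sub_of_hasDerivAt hderiv hint
  simp only [Complex.ofReal_one, Complex.ofReal_zero, one_mul, zero_mul] at this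
  rw [this]
  ring
lemma pointB {g : ℂ → ℂ} (hg : DifferentiableOn ℂ g (ball 0 1)) {p : ℝ} (hp : 1 ≤ p) :
    hardyNorm p g ≤ 2 * (ENNReal.ofReal (‖g 0‖) + hardyNorm p (deriv g)) := by
  have hp0 : (0:ℝ) < p := lt_of_lt_of_le one_pos hp
  have hπ : (0:ℝ) < 2*Real.pi := by positivity
  have hg' : DifferentiableOn ℂ (deriv g) (ball 0 1) :=
    ((hg.analyticOnNhd isOpen_ball).deriv).differentiableOn
  set a := ENNReal.ofReal (‖g 0‖) with ha
  set H := hardyNorm p (deriv g) with hH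
  rw [hardyNorm]
  apply iSup_le
  rintro ⟨r, hr0, hr1⟩
  simp only
  -- global measurability of the derivative-based integrand
  have hGmeas : Measurable (fun z : ℂ => ENNReal.ofReal (‖deriv g z‖ ^ p)) :=
    ENNReal.measurable_ofReal.comp
      (((Real.continuous_rpow_const hp0.le).measurable).comp
        (continuous_norm.measurable.comp (measurable_deriv g)))
  -- pointwise-in-θ bound
  have key : ∀ θ : ℝ,
      ENNReal.ofReal (‖g ((r:ℝ) * Complex.exp (θ * Complex.I))‖ ^ p)
      ≤ (2:ENNReal)^(p-1) * (a^p + ∫⁻ t in Set.Ioc (0:ℝ) 1,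
          ENNReal.ofReal (‖deriv g ((t:ℂ) * ((r:ℝ) * Complex.exp (θ * Complex.I)))‖ ^ p)) := by
    intro θ
    set w : ℂ := (r:ℝ) * Complex.exp (θ * Complex.I) with hw
    have hwball : w ∈ ball (0:ℂ) 1 := by
      rw [mem_ball_zero_iff]
      simp [hw, Complex.norm_real, Complex.norm_exp_ofReal_mul_I, abs_of_pos hr0, hr1]
    have hwnorm : ‖w‖ ≤ 1 := by
      simp [hw, Complex.norm_real, Complex.norm_exp_ofReal_mul_I, abs_of_pos hr0, hr1.le]
    have hmeasF : Measurable (fun t : ℝ => ENNReal.ofReal (‖deriv g ((t:ℂ) * w)‖)) :=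
      ENNReal.measurable_ofReal.comp ((continuous_norm.measurable.comp
        (measurable_deriv g)).comp (by continuity : Continuous fun t : ℝ => (t:ℂ)*w).measurable)
    -- step 1
    have h1 : ENNReal.ofReal (‖g w‖) ≤
        a + ∫⁻ t in Set.Ioc (0:ℝ) 1, ENNReal.ofReal (‖deriv g ((t:ℂ) * w)‖) := by
      rw [ftc_seg hg hg'.continuousOn hwball]
      refine le_trans (ENNReal.ofReal_le_ofReal (norm_add_le _ _)) ?_
      rw [ENNReal.ofReal_add (by positivity) (by positivity)]
      refine add_le_add_right ?_ _
      rw [intervalIntegral.integral_of_le zero_le_one]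
      calc ENNReal.ofReal (‖∫ t in Set.Ioc (0:ℝ) 1, w * deriv g ((t:ℂ) * w)‖)
          = (‖∫ t in Set.Ioc (0:ℝ) 1, w * deriv g ((t:ℂ) * w)‖ₑ : ENNReal) := by
            rw [ofReal_norm]
        _ ≤ ∫⁻ t in Set.Ioc (0:ℝ) 1, (‖w * deriv g ((t:ℂ) * w)‖ₑ : ENNReal) :=
            enorm_integral_le_lintegral_enorm _
        _ ≤ ∫⁻ t in Set.Ioc (0:ℝ) 1, ENNReal.ofReal (‖deriv g ((t:ℂ) * w)‖) := by
            refine lintegral_mono fun t => ?_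
            rw [← ofReal_norm, norm_mul]
            refine ENNReal.ofReal_le_ofReal ?_
            calc ‖w‖ * ‖deriv g ((t:ℂ)*w)‖
                ≤ 1 * ‖deriv g ((t:ℂ)*w)‖ :=
                  mul_le_mul_of_nonneg_right hwnorm (by positivity)
              _ = _ := one_mul _
    -- step 2: raise to p and apply Jensen
    have h2 : (∫⁻ t in Set.Ioc (0:ℝ) 1, ENNReal.ofReal (‖deriv g ((t:ℂ) * w)‖))^p
        ≤ ∫⁻ t in Set.Ioc (0:ℝ) 1,
            ENNReal.ofReal (‖deriv g ((t:ℂ) * w)‖ ^ p) := by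
      have hc : (volume.restrict (Set.Ioc (0:ℝ) 1)) univ = 1 := by
        simp [Real.volume_Ioc]
      have hj := jensen_avg hmeasF.aemeasurable hc one_ne_zero ENNReal.one_ne_top hp
      simp only [div_one] at hj
      have := ENNReal.rpow_le_rpow hj hp0.le
      rw [← ENNReal.rpow_mul, one_div, inv_mul_cancel₀ hp0.ne', ENNReal.rpow_one] at this
      refine this.trans (le_of_eq (lintegral_congr fun t => ?_))
      exact ENNReal.ofReal_rpow_of_nonneg (norm_nonneg _) hp0.le
    calc ENNReal.ofReal (‖g w‖ ^ p)
        = (ENNReal.ofReal (‖g w‖))^p :=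
          (ENNReal.ofReal_rpow_of_nonneg (norm_nonneg _) hp0.le).symm
      _ ≤ (a + ∫⁻ t in Set.Ioc (0:ℝ) 1,
            ENNReal.ofReal (‖deriv g ((t:ℂ) * w)‖))^p :=
          ENNReal.rpow_le_rpow h1 hp0.le
      _ ≤ (2:ENNReal)^(p-1) * (a^p + (∫⁻ t in Set.Ioc (0:ℝ) 1,
            ENNReal.ofReal (‖deriv g ((t:ℂ) * w)‖))^p) :=
          ENNReal.rpow_add_le_mul_rpow_add_rpow _ _ hp
      _ ≤ _ := by
          refine mul_le_mul_right (add_le_add_right h2 _) _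
  -- integrate the pointwise bound over θ
  set Jf : ℝ → ℝ → ENNReal := fun θ t => ENNReal.ofReal (‖deriv g ((t:ℂ) * ((r:ℝ) * Complex.exp (θ * Complex.I)))‖ ^ p) with hJf
  have hJmeas : Measurable (Function.uncurry Jf) := by
    have : Function.uncurry Jf = (fun z : ℂ => ENNReal.ofReal (‖deriv g z‖ ^ p)) ∘
        (fun q : ℝ × ℝ => (q.2:ℂ) * ((r:ℝ) * Complex.exp (q.1 * Complex.I))) := rfl
    rw [this]
    exact hGmeas.comp (by continuity : Continuous fun q : ℝ × ℝ =>
      (q.2:ℂ) * ((r:ℝ) * Complex.exp (q.1 * Complex.I))).measurable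
  have hswap : (∫⁻ θ in Set.Ioc (0:ℝ) (2*Real.pi), ∫⁻ t in Set.Ioc (0:ℝ) 1, Jf θ t)
      = ∫⁻ t in Set.Ioc (0:ℝ) 1, ∫⁻ θ in Set.Ioc (0:ℝ) (2*Real.pi), Jf θ t :=
    lintegral_lintegral_swap hJmeas.aemeasurable
  have inner_bound : ∀ t ∈ Set.Ioc (0:ℝ) 1,
      (∫⁻ θ in Set.Ioc (0:ℝ) (2*Real.pi), Jf θ t) ≤ ENNReal.ofReal (2*Real.pi) * H^p := by
    intro t ht
    have hs0 : 0 < t*r := mul_pos ht.1 hr0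
    have hs1 : t*r < 1 := lt_of_le_of_lt (mul_le_of_le_one_left hr0.le ht.2) hr1
    have hterm : ((∫⁻ θ in Set.Ioc (0:ℝ) (2*Real.pi),
        ENNReal.ofReal (‖deriv g ((↑(t*r) : ℝ) * Complex.exp (θ * Complex.I))‖ ^ p)) /
        ENNReal.ofReal (2*Real.pi)) ^ (1/p) ≤ H := by
      rw [hH, hardyNorm]
      exact le_iSup (fun s : Set.Ioo (0:ℝ) 1 =>
        ((∫⁻ θ in Set.Ioc (0:ℝ) (2*Real.pi),
          ENNReal.ofReal (‖deriv g ((s:ℝ) * Complex.exp (θ * Complex.I))‖ ^ p)) /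
          ENNReal.ofReal (2*Real.pi)) ^ (1/p)) (⟨t*r, hs0, hs1⟩ : Set.Ioo (0:ℝ) 1)
    have h3 := ENNReal.rpow_le_rpow hterm hp0.le
    rw [← ENNReal.rpow_mul, one_div, inv_mul_cancel₀ hp0.ne', ENNReal.rpow_one] at h3
    have h4 := (ENNReal.div_le_iff (ENNReal.ofReal_pos.mpr hπ).ne' ENNReal.ofReal_ne_top).mp h3
    refine le_trans (le_of_eq ?_) (h4.trans (le_of_eq (mul_comm _ _)))
    refine lintegral_congr fun θ => ?_
    simp only [hJf]
    congr 3
    push_cast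
    ring
  have Itheta_bound : (∫⁻ θ in Set.Ioc (0:ℝ) (2*Real.pi),
      ENNReal.ofReal (‖g ((r:ℝ) * Complex.exp (θ * Complex.I))‖ ^ p))
      ≤ ((2:ENNReal)^(p-1) * (a^p + H^p)) * ENNReal.ofReal (2*Real.pi) := by
    calc (∫⁻ θ in Set.Ioc (0:ℝ) (2*Real.pi),
        ENNReal.ofReal (‖g ((r:ℝ) * Complex.exp (θ * Complex.I))‖ ^ p))
        ≤ ∫⁻ θ in Set.Ioc (0:ℝ) (2*Real.pi),
            (2:ENNReal)^(p-1) * (a^p + ∫⁻ t in Set.Ioc (0:ℝ) 1, Jf θ t) :=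
          lintegral_mono fun θ => key θ
      _ = (2:ENNReal)^(p-1) * ∫⁻ θ in Set.Ioc (0:ℝ) (2*Real.pi),
            (a^p + ∫⁻ t in Set.Ioc (0:ℝ) 1, Jf θ t) :=
          lintegral_const_mul' _ _ (by
            exact ENNReal.rpow_ne_top_of_nonneg (by linarith) ENNReal.ofNat_ne_top)
      _ = (2:ENNReal)^(p-1) * (a^p * ENNReal.ofReal (2*Real.pi)
            + ∫⁻ θ in Set.Ioc (0:ℝ) (2*Real.pi), ∫⁻ t in Set.Ioc (0:ℝ) 1, Jf θ t) := by
          rw [lintegral_add_left measurable_const, setLIntegral_const, Real.volume_Ioc,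
            sub_zero]
      _ ≤ (2:ENNReal)^(p-1) * (a^p * ENNReal.ofReal (2*Real.pi)
            + ENNReal.ofReal (2*Real.pi) * H^p) := by
          refine mul_le_mul_right (add_le_add_right ?_ _) _
          rw [hswap]
          calc (∫⁻ t in Set.Ioc (0:ℝ) 1, ∫⁻ θ in Set.Ioc (0:ℝ) (2*Real.pi), Jf θ t)
              ≤ ∫⁻ _ in Set.Ioc (0:ℝ) 1, ENNReal.ofReal (2*Real.pi) * H^p :=
                setLIntegral_mono measurable_const inner_bound
            _ = ENNReal.ofReal (2*Real.pi) * H^p := by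
                rw [setLIntegral_const, Real.volume_Ioc]
                simp
      _ = ((2:ENNReal)^(p-1) * (a^p + H^p)) * ENNReal.ofReal (2*Real.pi) := by ring_nf
  have hdiv : (∫⁻ θ in Set.Ioc (0:ℝ) (2*Real.pi),
      ENNReal.ofReal (‖g ((r:ℝ) * Complex.exp (θ * Complex.I))‖ ^ p))
      / ENNReal.ofReal (2*Real.pi) ≤ (2:ENNReal)^(p-1) * (a^p + H^p) :=
    ENNReal.div_le_of_le_mul Itheta_bound
  refine (ENNReal.rpow_le_rpow hdiv (by positivity)).trans ?_
  rw [ENNReal.mul_rpow_of_nonneg _ _ (by positivity)]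
  have e1 : ((2:ENNReal)^(p-1))^(1/p) ≤ 2 := by
    rw [← ENNReal.rpow_mul]
    calc (2:ENNReal) ^ ((p-1) * (1/p)) ≤ (2:ENNReal) ^ (1:ℝ) := by
          apply ENNReal.rpow_le_rpow_of_exponent_le one_le_two
          rw [mul_one_div, div_le_one hp0]; linarith
      _ = 2 := ENNReal.rpow_one 2
  have e2 : (a^p + H^p)^(1/p) ≤ a + H := ENNReal.rpow_add_rpow_le_add a H hp
  exact mul_le_mul' e1 e2

lemma iter_diffOn {f : ℂ → ℂ} (hf : DifferentiableOn ℂ f (ball 0 1)) (k : ℕ) :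
    DifferentiableOn ℂ (deriv^[k] f) (ball 0 1) := by
  induction k with
  | zero => exact hf
  | succ k ih =>
      rw [Function.iterate_succ_apply']
      exact ((ih.analyticOnNhd isOpen_ball).deriv).differentiableOn

lemma abs_zero_le_hardy {g : ℂ → ℂ} (hg : DifferentiableOn ℂ g (ball 0 1)) {p : ℝ}
    (hp : 1 ≤ p) : ENNReal.ofReal (‖g 0‖) ≤ hardyNorm p g := by
  refine (pointA hg (by norm_num : (0:ℝ) < 1/2) (by norm_num) hp).trans ?_
  exact le_iSup (fun r : Set.Ioo (0:ℝ) 1 =>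
    ((∫⁻ θ in Set.Ioc (0:ℝ) (2*Real.pi),
        ENNReal.ofReal (‖g ((r:ℝ) * Complex.exp (θ * Complex.I))‖ ^ p)) /
      ENNReal.ofReal (2*Real.pi)) ^ (1/p)) (⟨1/2, by norm_num, by norm_num⟩ : Set.Ioo (0:ℝ) 1)

lemma hardy_le_snNorm {p : ℝ} (hp : 1 ≤ p) :
    ∀ (k : ℕ) (g : ℂ → ℂ), DifferentiableOn ℂ g (ball 0 1) →
      hardyNorm p g ≤ 2^(k+1) * snNorm k p g := by
  intro k
  induction k with
  | zero =>
      intro g hg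
      simp only [snNorm, pow_one]
      exact le_mul_of_one_le_left (by simp) (by norm_num)
  | succ k ih =>
      intro g hg
      have hg' : DifferentiableOn ℂ (deriv g) (ball 0 1) :=
        ((hg.analyticOnNhd isOpen_ball).deriv).differentiableOn
      calc hardyNorm p g ≤ 2 * (ENNReal.ofReal (‖g 0‖) + hardyNorm p (deriv g)) :=
            pointB hg hp
        _ ≤ 2 * (ENNReal.ofReal (‖g 0‖) + 2^(k+1) * snNorm k p (deriv g)) :=
            mul_le_mul_right (add_le_add_right (ih (deriv g) hg') _) _
        _ ≤ 2 * (2^(k+1) * ENNReal.ofReal (‖g 0‖) + 2^(k+1) * snNorm k p (deriv g)) := by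
            refine mul_le_mul_right (add_le_add_left ?_ _) _
            exact le_mul_of_one_le_left (by simp) (one_le_two.trans (by
              exact_mod_cast le_self_pow₀ one_le_two (Nat.succ_ne_zero k)))
        _ = 2^(k+2) * snNorm (k+1) p g := by
            simp only [snNorm]
            ring
  
lemma snNorm_iterate {p : ℝ} : ∀ (j m : ℕ) (f : ℂ → ℂ),
    snNorm m p (deriv^[j] f) ≤ snNorm (m+j) p f := by
  intro j
  induction j with
  | zero => intro m f; simp
  | succ j ih =>
      intro m f
      rw [Function.iterate_succ_apply]
      calc snNorm m p (deriv^[j] (deriv f)) ≤ snNorm (m+j) p (deriv f) := ih m (deriv f)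
        _ ≤ snNorm (m+j+1) p f := by
            simp only [snNorm]
            exact le_add_self
        _ = snNorm (m+(j+1)) p f := by ring_nf

lemma snNorm_le_sum {p : ℝ} (hp : 1 ≤ p) : ∀ (n : ℕ) (f : ℂ → ℂ),
    DifferentiableOn ℂ f (ball 0 1) →
    snNorm n p f ≤ ∑ k ∈ Finset.range (n+1), hardyNorm p (deriv^[k] f) := by
  intro n
  induction n with
  | zero => intro f hf; simp [snNorm]
  | succ n ih =>
      intro f hf
      have hf' : DifferentiableOn ℂ (deriv f) (ball 0 1) :=
        ((hf.analyticOnNhd isOpen_ball).deriv).differentiableOn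
      calc snNorm (n+1) p f = ENNReal.ofReal (‖f 0‖) + snNorm n p (deriv f) := rfl
        _ ≤ hardyNorm p f + ∑ k ∈ Finset.range (n+1), hardyNorm p (deriv^[k] (deriv f)) :=
            add_le_add (abs_zero_le_hardy hf hp) (ih (deriv f) hf')
        _ = ∑ k ∈ Finset.range (n+2), hardyNorm p (deriv^[k] f) := by
            rw [Finset.sum_range_succ' (fun k => hardyNorm p (deriv^[k] f)) (n+1)]
            simp only [Function.iterate_succ_apply, Function.iterate_zero_apply]
            rw [add_comm]

theorem equiv_norm_hardy_sum (n : ℕ) (p : ℝ) (hn : 1 ≤ n) (hp : 1 ≤ p) :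
    ∃ C₁ C₂ : ℝ, 0 < C₁ ∧ 0 < C₂ ∧ ∀ f : ℂ → ℂ, MemS n p f →
      snNorm n p f ≤
        ENNReal.ofReal C₁ * ∑ k ∈ Finset.range (n+1), hardyNorm p (iteratedDeriv k f) ∧
      ∑ k ∈ Finset.range (n+1), hardyNorm p (iteratedDeriv k f) ≤
        ENNReal.ofReal C₂ * snNorm n p f := by
  refine ⟨1, (((n+1) * 2^(n+1) : ℕ) : ℝ), one_pos, by positivity, ?_⟩
  intro f hf
  obtain ⟨hdiff, -⟩ := hf
  simp only [iteratedDeriv_eq_iterate]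
  constructor
  · rw [ENNReal.ofReal_one, one_mul]
    exact snNorm_le_sum hp n f hdiff
  · have hterm : ∀ k ∈ Finset.range (n+1),
        hardyNorm p (deriv^[k] f) ≤ 2^(n+1) * snNorm n p f := by
      intro k hk
      have hkn : k ≤ n := Nat.lt_succ_iff.mp (Finset.mem_range.mp hk)
      calc hardyNorm p (deriv^[k] f) ≤ 2^((n-k)+1) * snNorm (n-k) p (deriv^[k] f) :=
            hardy_le_snNorm hp (n-k) _ (iter_diffOn hdiff k)
        _ ≤ 2^(n+1) * snNorm n p f := by
            refine mul_le_mul' (pow_le_pow_right₀ one_le_two (by omega)) ?_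
            have := snNorm_iterate (p := p) k (n-k) f
            rwa [Nat.sub_add_cancel hkn] at this
    calc ∑ k ∈ Finset.range (n+1), hardyNorm p (deriv^[k] f)
        ≤ ∑ _k ∈ Finset.range (n+1), 2^(n+1) * snNorm n p f := Finset.sum_le_sum hterm
      _ = ENNReal.ofReal (((n+1) * 2^(n+1) : ℕ) : ℝ) * snNorm n p f := by
          rw [Finset.sum_const, Finset.card_range, nsmul_eq_mul, ENNReal.ofReal_natCast]
          push_cast [Nat.cast_add, Nat.cast_one, Nat.cast_mul, Nat.cast_pow]
          ring
end

section
/- For n ≥ 1 and 1 ≤ p < ∞, the operator M_z on S_{n,0}^p is similar to T = M_z + n T_z on H^p via the n-th derivative: M_z = (d^n/dz^n)^{-1} ∘ T ∘ (d^n/dz^n), where d^n/dz^n : S_{n,0}^p → H^p is an isometric isomorphism. -/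
open MeasureTheory Metric Set Filter

lemma aux_mem_ball {z : ℂ} (hz : z ∈ ball (0:ℂ) 1) {t : ℝ} (h0 : 0 ≤ t) (h1 : t ≤ 1) :
    (t:ℂ) * z ∈ ball (0:ℂ) 1 := by
  simp only [mem_ball, dist_zero_right, norm_mul, Complex.norm_real, Real.norm_eq_abs,
    abs_of_nonneg h0] at *
  calc t * ‖z‖ ≤ 1 * ‖z‖ := by nlinarith [norm_nonneg z]
  _ < 1 := by simpa using hz

lemma aux_analytic {f : ℂ → ℂ} (hf : DifferentiableOn ℂ f (ball 0 1)) (k : ℕ) :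
    AnalyticOnNhd ℂ (iteratedDeriv k f) (ball 0 1) := by
  have h := hf.analyticOnNhd isOpen_ball
  induction k with
  | zero => simpa using h
  | succ k ih => rw [iteratedDeriv_succ]; exact ih.deriv

lemma aux_hasDerivAt {f : ℂ → ℂ} (hf : DifferentiableOn ℂ f (ball 0 1)) (k : ℕ)
    {w : ℂ} (hw : w ∈ ball (0:ℂ) 1) :
    HasDerivAt (iteratedDeriv k f) (iteratedDeriv (k+1) f w) w := by
  have h := ((aux_analytic hf k w hw).differentiableAt).hasDerivAt
  rwa [iteratedDeriv_succ]

lemma aux_contOn {f : ℂ → ℂ} (hf : DifferentiableOn ℂ f (ball 0 1)) (k : ℕ) :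
    ContinuousOn (iteratedDeriv k f) (ball 0 1) :=
  (aux_analytic hf k).continuousOn

lemma aux_inner_hasDerivAt (z : ℂ) (t : ℝ) :
    HasDerivAt (fun t : ℝ => (t:ℂ) * z) z t := by
  simpa using (Complex.ofRealCLM.hasDerivAt (x := t)).mul_const z

lemma aux_comp_hasDerivAt {G G' : ℂ → ℂ} {z : ℂ} {t : ℝ}
    (hG : HasDerivAt G (G' ((t:ℂ)*z)) ((t:ℂ)*z)) :
    HasDerivAt (fun t : ℝ => G ((t:ℂ)*z)) (G' ((t:ℂ)*z) * z) t :=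
  HasDerivAt.comp t hG (aux_inner_hasDerivAt z t)







/-- Leibniz rule for `w * f w` on the ball. -/
lemma aux_leibniz {f : ℂ → ℂ} (hf : DifferentiableOn ℂ f (ball 0 1)) (m : ℕ) :
    ∀ w ∈ ball (0:ℂ) 1, iteratedDeriv (m+1) (fun w => w * f w) w
      = w * iteratedDeriv (m+1) f w + ((m:ℂ)+1) * iteratedDeriv m f w := by
  induction m with
  | zero =>
    intro w hw
    have h := aux_hasDerivAt hf 0 hw
    rw [iteratedDeriv_zero] at h
    have h1 : HasDerivAt (fun w : ℂ => w * f w) (1 * f w + w * iteratedDeriv 1 f w) w := by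
      exact (hasDerivAt_id' w).mul h
    rw [iteratedDeriv_one, h1.deriv, iteratedDeriv_zero]
    ring
  | succ m ih =>
    intro w hw
    have heq : (fun w => iteratedDeriv (m+1) (fun w => w * f w) w)
        =ᶠ[nhds w] (fun w => w * iteratedDeriv (m+1) f w + ((m:ℂ)+1) * iteratedDeriv m f w) := by
      filter_upwards [isOpen_ball.mem_nhds hw] with x hx using ih x hx
    have h1 : HasDerivAt (fun w => w * iteratedDeriv (m+1) f w + ((m:ℂ)+1) * iteratedDeriv m f w)
        ((1 * iteratedDeriv (m+1) f w + w * iteratedDeriv (m+2) f w)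
          + ((m:ℂ)+1) * iteratedDeriv (m+1) f w) w := by
      exact ((hasDerivAt_id w).mul (aux_hasDerivAt hf (m+1) hw)).add
        ((aux_hasDerivAt hf m hw).const_mul _)
    rw [iteratedDeriv_succ, heq.deriv_eq, h1.deriv]
    push_cast
    ring

/-- FTC along the segment: `Volterra G z = F z - F 0` when `F' = G` on the ball. -/
lemma aux_volterra_eq {F G : ℂ → ℂ} {z : ℂ} (hz : z ∈ ball (0:ℂ) 1)
    (hF : ∀ w ∈ ball (0:ℂ) 1, HasDerivAt F (G w) w)
    (hG : ContinuousOn G (ball 0 1)) :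
    Volterra G z = F z - F 0 := by
  have key : ∫ t in (0:ℝ)..1, z * G ((t:ℂ) * z)
      = (fun t : ℝ => F ((t:ℂ)*z)) 1 - (fun t : ℝ => F ((t:ℂ)*z)) 0 := by
    apply intervalIntegral.integral_eq_sub_of_hasDerivAt (f := fun t : ℝ => F ((t:ℂ)*z)) (f' := fun t : ℝ => z * G ((t:ℂ)*z))
    · intro t ht
      rw [uIcc_of_le (by norm_num)] at ht
      have hm := aux_mem_ball hz ht.1 ht.2
      have := aux_comp_hasDerivAt (G := F) (G' := G) (hF _ hm)
      simpa [mul_comm] using this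
    · apply ContinuousOn.intervalIntegrable
      apply continuousOn_const.mul
      apply hG.comp (by fun_prop)
      intro t ht
      rw [uIcc_of_le (by norm_num)] at ht
      exact aux_mem_ball hz ht.1 ht.2
  simpa [Volterra] using key

/-- Taylor's formula with integral remainder on `[0,1]`. -/
lemma aux_taylor (u : ℕ → ℝ → ℂ) (n : ℕ)
    (hd : ∀ k < n, ∀ t ∈ Icc (0:ℝ) 1, HasDerivAt (u k) (u (k+1) t) t)
    (hc : ContinuousOn (u n) (Icc (0:ℝ) 1)) :
    ∀ j < n, u 0 1 - ∑ m ∈ Finset.range (j+1), (1/(m.factorial:ℂ)) * u m 0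
      = (1/(j.factorial:ℂ)) * ∫ t in (0:ℝ)..1, (1-(t:ℂ))^j * u (j+1) t := by
  have hcont : ∀ k ≤ n, ContinuousOn (u k) (Icc (0:ℝ) 1) := by
    intro k hk
    rcases eq_or_lt_of_le hk with rfl | hk
    · exact hc
    · exact fun t ht => ((hd k hk t ht).continuousAt).continuousWithinAt
  have hii : ∀ k, k ≤ n → IntervalIntegrable (u k) volume 0 1 := by
    intro k hk
    have h := hcont k hk
    rw [← uIcc_of_le (by norm_num : (0:ℝ) ≤ 1)] at h
    exact h.intervalIntegrable
  intro j
  induction j with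
  | zero =>
    intro hn
    have := intervalIntegral.integral_eq_sub_of_hasDerivAt
      (f := u 0) (f' := u 1) (fun t ht => hd 0 hn t (by rwa [uIcc_of_le (by norm_num)] at ht))
      (hii 1 hn)
    simp only [pow_zero, one_mul, Nat.factorial_zero, Nat.cast_one, Finset.sum_range_one]
    rw [show (0:ℕ)+1 = 1 from rfl, this, Finset.sum_range_one]
    simp
  | succ j ih =>
    intro hjn
    have hj : j < n := Nat.lt_of_succ_lt hjn
    -- integration by parts
    have hderiv_a : ∀ t ∈ uIcc (0:ℝ) 1,
        HasDerivAt (fun t : ℝ => (1-(t:ℂ))^(j+1))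
          (((j:ℂ)+1) * (1-(t:ℂ))^j * (-1)) t := by
      intro t ht
      have h1 : HasDerivAt (fun t : ℝ => 1-(t:ℂ)) (-1) t := by
        simpa using (aux_inner_hasDerivAt 1 t).const_sub 1
      have := HasDerivAt.comp t (hasDerivAt_pow (j+1) ((1:ℂ)-(t:ℂ))) h1
      simpa [Function.comp_def, mul_comm, mul_assoc, mul_left_comm] using this
    have hderiv_b : ∀ t ∈ uIcc (0:ℝ) 1, HasDerivAt (u (j+1)) (u (j+2) t) t := by
      intro t ht
      exact hd (j+1) hjn t (by rwa [uIcc_of_le (by norm_num)] at ht)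
    have hia : IntervalIntegrable (fun t : ℝ => ((j:ℂ)+1) * (1-(t:ℂ))^j * (-1)) volume 0 1 := by
      apply ContinuousOn.intervalIntegrable
      fun_prop
    have parts := intervalIntegral.integral_mul_deriv_eq_deriv_mul
      hderiv_a hderiv_b hia (hii (j+2) hjn)
    -- parts : ∫ (1-t)^{j+1} * u (j+2) t = ... - ∫ (↑j+1)(1-t)^j (-1) * u (j+1) t
    have hpull : ∫ t in (0:ℝ)..1, ((j:ℂ)+1) * (1-(t:ℂ))^j * (-1) * u (j+1) t
        = -(((j:ℂ)+1) * ∫ t in (0:ℝ)..1, (1-(t:ℂ))^j * u (j+1) t) := by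
      rw [← intervalIntegral.integral_const_mul, ← intervalIntegral.integral_neg]
      congr 1; ext t; ring
    rw [hpull] at parts
    simp only [Complex.ofReal_one, Complex.ofReal_zero, sub_self, sub_zero] at parts
    -- now assemble
    have hfact : ((j+1).factorial : ℂ) = ((j:ℂ)+1) * (j.factorial : ℂ) := by
      push_cast [Nat.factorial_succ]; ring
    have hf0 : (j.factorial : ℂ) ≠ 0 := Nat.cast_ne_zero.2 (Nat.factorial_ne_zero j)
    have hf1 : ((j:ℂ)+1) ≠ 0 := by
      have : ((j:ℂ)+1) = ((j+1 : ℕ) : ℂ) := by push_cast; ring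
      rw [this]; exact Nat.cast_ne_zero.2 (Nat.succ_ne_zero j)
    rw [Finset.sum_range_succ, sub_add_eq_sub_sub, ih hj, hfact]
    rw [parts]
    field_simp
    ring

/-- Taylor representation: a function vanishing to order `n` at 0 is `Vop n` of its
`n`-th derivative. -/
lemma aux_vop_eq {F : ℂ → ℂ} (hF : DifferentiableOn ℂ F (ball 0 1)) (n : ℕ) (hn : 1 ≤ n)
    (h0 : ∀ m < n, iteratedDeriv m F 0 = 0) {z : ℂ} (hz : z ∈ ball (0:ℂ) 1) :
    F z = Vop n (iteratedDeriv n F) z := by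
  obtain ⟨k, rfl⟩ : ∃ k, n = k + 1 := ⟨n-1, (Nat.succ_pred_eq_of_pos hn).symm⟩
  set u : ℕ → ℝ → ℂ := fun m t => z^m * iteratedDeriv m F ((t:ℂ)*z) with hu
  have hmem : ∀ t ∈ Icc (0:ℝ) 1, (t:ℂ)*z ∈ ball (0:ℂ) 1 := fun t ht => aux_mem_ball hz ht.1 ht.2
  have hd : ∀ m, ∀ t ∈ Icc (0:ℝ) 1, HasDerivAt (u m) (u (m+1) t) t := by
    intro m t ht
    have h := aux_comp_hasDerivAt (G := iteratedDeriv m F) (G' := iteratedDeriv (m+1) F)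
      (aux_hasDerivAt hF m (hmem t ht))
    have := h.const_mul (z^m)
    have he : z^m * (iteratedDeriv (m+1) F ((t:ℂ)*z) * z) = u (m+1) t := by rw [hu]; ring
    rw [he] at this
    exact this
  have hc : ContinuousOn (u (k+1)) (Icc (0:ℝ) 1) := by
    apply continuousOn_const.mul
    apply (aux_contOn hF (k+1)).comp (by fun_prop) hmem
  have ht := aux_taylor u (k+1) (fun m _ => hd m) hc k (Nat.lt_succ_self k)
  have hsum : ∑ m ∈ Finset.range (k+1), (1/(m.factorial:ℂ)) * u m 0 = 0 := by
    apply Finset.sum_eq_zero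
    intro m hm
    have hz0 : u m 0 = z^m * iteratedDeriv m F 0 := by simp [hu]
    rw [hz0, h0 m (Finset.mem_range.1 hm)]; simp
  rw [hsum, sub_zero] at ht
  have hF0 : u 0 1 = F z := by simp [hu]
  rw [← hF0, ht, Vop]
  simp only [Nat.add_sub_cancel]
  congr 1
  apply intervalIntegral.integral_congr
  intro t ht
  simp only [hu]
  rw [show z - (t:ℂ)*z = (1-(t:ℂ))*z by ring, mul_pow]
  ring


lemma aux_circle_mem {s : ℝ} (h0 : 0 < s) (h1 : s < 1) (θ : ℝ) :
    ((s:ℝ):ℂ) * Complex.exp (θ * Complex.I) ∈ ball (0:ℂ) 1 := by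
  simp only [mem_ball, dist_zero_right, norm_mul, Complex.norm_real, Real.norm_eq_abs,
    Complex.norm_exp_ofReal_mul_I, mul_one,
    abs_of_pos h0]
  exact h1

lemma aux_circle_cont {a : ℂ → ℂ} (ha : ContinuousOn a (ball (0:ℂ) 1))
    {s : ℝ} (h0 : 0 < s) (h1 : s < 1) :
    Continuous (fun θ : ℝ => a (((s:ℝ):ℂ) * Complex.exp (θ * Complex.I))) := by
  apply ha.comp_continuous (by fun_prop)
  exact fun θ => aux_circle_mem h0 h1 θ

lemma aux_circle_meas {a : ℂ → ℂ} (ha : ContinuousOn a (ball (0:ℂ) 1))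
    {s : ℝ} (h0 : 0 < s) (h1 : s < 1) :
    Measurable (fun θ : ℝ =>
      ENNReal.ofReal (‖a (((s:ℝ):ℂ) * Complex.exp (θ * Complex.I))‖)) := by
  exact ENNReal.measurable_ofReal.comp
    ((continuous_norm.comp (aux_circle_cont ha h0 h1)).measurable)

lemma aux_hardy_congr {p : ℝ} {a b : ℂ → ℂ} (h : EqOn a b (ball (0:ℂ) 1)) :
    hardyNorm p a = hardyNorm p b := by
  unfold hardyNorm
  congr 1
  ext r
  congr 2
  apply lintegral_congr
  intro θ
  rw [h (aux_circle_mem r.2.1 r.2.2 θ)]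

lemma aux_hardy_mono {p : ℝ} (hp : 1 ≤ p) {a b : ℂ → ℂ}
    (h : ∀ z ∈ ball (0:ℂ) 1, ‖a z‖ ≤ ‖b z‖) :
    hardyNorm p a ≤ hardyNorm p b := by
  unfold hardyNorm
  apply iSup_mono
  intro r
  apply ENNReal.rpow_le_rpow _ (by positivity)
  apply ENNReal.div_le_div_right
  apply lintegral_mono
  intro θ
  apply ENNReal.ofReal_le_ofReal
  apply Real.rpow_le_rpow (norm_nonneg _) (h _ (aux_circle_mem r.2.1 r.2.2 θ)) (by linarith)

lemma aux_ofReal_rpow {x : ℝ} (hx : 0 ≤ x) {p : ℝ} (hp : 0 ≤ p) :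
    ENNReal.ofReal (x ^ p) = ENNReal.ofReal x ^ p :=
  (ENNReal.ofReal_rpow_of_nonneg hx hp).symm

lemma aux_hardy_add_le {p : ℝ} (hp : 1 ≤ p) {a b : ℂ → ℂ}
    (ha : ContinuousOn a (ball (0:ℂ) 1)) (hb : ContinuousOn b (ball (0:ℂ) 1)) :
    hardyNorm p (fun z => a z + b z) ≤ hardyNorm p a + hardyNorm p b := by
  have hp0 : (0:ℝ) ≤ p := by linarith
  have hpne : p ≠ 0 := by linarith
  unfold hardyNorm
  apply iSup_le
  rintro ⟨r, hr⟩
  set C := ENNReal.ofReal (2*Real.pi) with hC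
  set u : ℝ → ENNReal := fun θ =>
    ENNReal.ofReal (‖a ((r:ℂ) * Complex.exp (θ * Complex.I))‖) with hu
  set v : ℝ → ENNReal := fun θ =>
    ENNReal.ofReal (‖b ((r:ℂ) * Complex.exp (θ * Complex.I))‖) with hv
  have hstep1 : (∫⁻ θ in Set.Ioc (0:ℝ) (2*Real.pi),
      ENNReal.ofReal (‖(fun z => a z + b z)
        ((r:ℂ) * Complex.exp (θ * Complex.I))‖ ^ p))
      ≤ ∫⁻ θ in Set.Ioc (0:ℝ) (2*Real.pi), (u θ + v θ) ^ p := by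
    apply lintegral_mono
    intro θ
    simp only
    rw [aux_ofReal_rpow (norm_nonneg _) hp0]
    apply ENNReal.rpow_le_rpow _ hp0
    rw [hu, hv, ← ENNReal.ofReal_add (norm_nonneg _) (norm_nonneg _)]
    exact ENNReal.ofReal_le_ofReal (norm_add_le _ _)
  have hmink := ENNReal.lintegral_Lp_add_le
    ((aux_circle_meas ha hr.1 hr.2).aemeasurable.restrict)
    ((aux_circle_meas hb hr.1 hr.2).aemeasurable.restrict) hp
    (μ := volume.restrict (Set.Ioc (0:ℝ) (2*Real.pi)))
  calc ((∫⁻ θ in Set.Ioc (0:ℝ) (2*Real.pi),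
      ENNReal.ofReal (‖(fun z => a z + b z)
        ((r:ℂ) * Complex.exp (θ * Complex.I))‖ ^ p)) / C) ^ (1/p)
      ≤ ((∫⁻ θ in Set.Ioc (0:ℝ) (2*Real.pi), (u θ + v θ) ^ p) / C) ^ (1/p) := by
        apply ENNReal.rpow_le_rpow _ (by positivity)
        exact ENNReal.div_le_div_right hstep1 C
    _ = (∫⁻ θ in Set.Ioc (0:ℝ) (2*Real.pi), (u θ + v θ) ^ p) ^ (1/p) / C ^ (1/p) := by
        rw [ENNReal.div_rpow_of_nonneg _ _ (by positivity)]
    _ ≤ ((∫⁻ θ in Set.Ioc (0:ℝ) (2*Real.pi), u θ ^ p) ^ (1/p)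
          + (∫⁻ θ in Set.Ioc (0:ℝ) (2*Real.pi), v θ ^ p) ^ (1/p)) / C ^ (1/p) := by
        exact ENNReal.div_le_div_right hmink _
    _ = (∫⁻ θ in Set.Ioc (0:ℝ) (2*Real.pi), u θ ^ p) ^ (1/p) / C ^ (1/p)
          + (∫⁻ θ in Set.Ioc (0:ℝ) (2*Real.pi), v θ ^ p) ^ (1/p) / C ^ (1/p) := by
        rw [ENNReal.add_div]
    _ = ((∫⁻ θ in Set.Ioc (0:ℝ) (2*Real.pi), u θ ^ p) / C) ^ (1/p)
          + ((∫⁻ θ in Set.Ioc (0:ℝ) (2*Real.pi), v θ ^ p) / C) ^ (1/p) := by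
        rw [ENNReal.div_rpow_of_nonneg _ _ (by positivity),
          ENNReal.div_rpow_of_nonneg _ _ (by positivity)]
    _ ≤ _ := by
        apply add_le_add
        · apply le_iSup_of_le ⟨r, hr⟩
          apply le_of_eq
          congr 1
          congr 1
          apply lintegral_congr
          intro θ
          rw [hu]
          rw [← aux_ofReal_rpow (norm_nonneg _) hp0]
        · apply le_iSup_of_le ⟨r, hr⟩
          apply le_of_eq
          congr 1
          congr 1
          apply lintegral_congr
          intro θ
          rw [hv]
          rw [← aux_ofReal_rpow (norm_nonneg _) hp0]

lemma aux_hardy_const_mul {p : ℝ} (hp : 1 ≤ p) (c : ℂ) (a : ℂ → ℂ) :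
    hardyNorm p (fun z => c * a z) ≤ ENNReal.ofReal (‖c‖) * hardyNorm p a := by
  have hp0 : (0:ℝ) ≤ p := by linarith
  have hpne : p ≠ 0 := by linarith
  unfold hardyNorm
  apply iSup_le
  rintro ⟨r, hr⟩
  set C := ENNReal.ofReal (2*Real.pi)
  have key : (∫⁻ θ in Set.Ioc (0:ℝ) (2*Real.pi),
      ENNReal.ofReal (‖(fun z => c * a z) ((r:ℂ) * Complex.exp (θ * Complex.I))‖ ^ p))
      = ENNReal.ofReal (‖c‖) ^ p * ∫⁻ θ in Set.Ioc (0:ℝ) (2*Real.pi),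
      ENNReal.ofReal (‖a ((r:ℂ) * Complex.exp (θ * Complex.I))‖ ^ p) := by
    rw [← lintegral_const_mul' _ _ (ENNReal.rpow_ne_top_of_nonneg hp0 ENNReal.ofReal_ne_top)]
    apply lintegral_congr
    intro θ
    simp only [norm_mul]
    rw [Real.mul_rpow (norm_nonneg _) (norm_nonneg _),
      ENNReal.ofReal_mul (by positivity), aux_ofReal_rpow (norm_nonneg _) hp0]
  rw [key, mul_div_assoc, ENNReal.mul_rpow_of_nonneg _ _ (by positivity),
    ← ENNReal.rpow_mul, mul_one_div_cancel hpne, ENNReal.rpow_one]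
  apply mul_le_mul_right
  exact le_iSup_of_le ⟨r, hr⟩ le_rfl

lemma aux_jensen {p : ℝ} (hp : 1 ≤ p) {h : ℝ → ENNReal}
    (hm : AEMeasurable h (volume.restrict (Ioc (0:ℝ) 1))) :
    (∫⁻ t in Ioc (0:ℝ) 1, h t) ^ p ≤ ∫⁻ t in Ioc (0:ℝ) 1, (h t) ^ p := by
  rcases eq_or_lt_of_le hp with rfl | hp1
  · simp
  · have hpq := Real.HolderConjugate.conjExponent hp1
    have hq0 : 0 < p.conjExponent := hpq.symm.pos
    have hol := ENNReal.lintegral_mul_le_Lp_mul_Lq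
      (volume.restrict (Ioc (0:ℝ) 1)) hpq hm aemeasurable_const (g := fun _ => 1)
    simp only [mul_one, ENNReal.one_rpow, lintegral_const, Measure.restrict_apply,
      MeasurableSet.univ, univ_inter, Real.volume_Ioc] at hol
    rw [show ((1:ℝ) - 0) = 1 by norm_num] at hol
    simp only [ENNReal.ofReal_one, mul_one, ENNReal.one_rpow, Pi.mul_apply] at hol
    calc (∫⁻ t in Ioc (0:ℝ) 1, h t) ^ p
        ≤ ((∫⁻ t in Ioc (0:ℝ) 1, (h t) ^ p) ^ (1/p)) ^ p :=
          ENNReal.rpow_le_rpow hol (by linarith)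
      _ = ∫⁻ t in Ioc (0:ℝ) 1, (h t) ^ p := by
          rw [← ENNReal.rpow_mul, one_div_mul_cancel (by linarith), ENNReal.rpow_one]


lemma aux_hardy_volterra {p : ℝ} (hp : 1 ≤ p) {g : ℂ → ℂ}
    (hg : ContinuousOn g (ball (0:ℂ) 1)) :
    hardyNorm p (Volterra g) ≤ hardyNorm p g := by
  have hp0 : (0:ℝ) < p := by linarith
  set H := hardyNorm p g with hH
  set C := ENNReal.ofReal (2*Real.pi) with hC
  have hpi : (0:ℝ) < 2*Real.pi := by positivity
  have hC0 : C ≠ 0 := by rw [hC, ne_eq, ENNReal.ofReal_eq_zero, not_le]; exact hpi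
  have hCt : C ≠ ⊤ := ENNReal.ofReal_ne_top
  rw [hardyNorm]
  apply iSup_le
  rintro ⟨r, hr⟩
  simp only
  have hmem : ∀ (t θ : ℝ), 0 ≤ t → t ≤ 1 →
      (t:ℂ) * (((r:ℝ):ℂ) * Complex.exp (θ * Complex.I)) ∈ ball (0:ℂ) 1 := by
    intro t θ h0 h1
    exact aux_mem_ball (aux_circle_mem hr.1 hr.2 θ) h0 h1
  -- the function appearing after Jensen
  set G : ℝ → ℝ → ENNReal := fun θ t =>
    (ENNReal.ofReal (‖g ((t:ℂ) * (((r:ℝ):ℂ) * Complex.exp (θ * Complex.I)))‖)) ^ p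
    with hG
  have stepA : ∀ θ : ℝ,
      ENNReal.ofReal (‖Volterra g ((r:ℝ) * Complex.exp (θ * Complex.I))‖ ^ p)
      ≤ ∫⁻ t in Ioc (0:ℝ) 1, G θ t := by
    intro θ
    set w : ℂ := ((r:ℝ):ℂ) * Complex.exp (θ * Complex.I) with hw
    have hwnorm : ‖w‖ = r := by
      rw [hw]; simp [Complex.norm_exp_ofReal_mul_I, abs_of_pos hr.1]
    have hgc : ContinuousOn (fun t : ℝ => g ((t:ℂ) * w)) (Icc 0 1) := by
      apply hg.comp (by fun_prop)
      intro t ht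
      exact hmem t θ ht.1 ht.2
    have habs : ContinuousOn (fun t : ℝ => ‖g ((t:ℂ) * w)‖) (Icc 0 1) :=
      continuous_norm.comp_continuousOn hgc
    have hint2 : IntervalIntegrable (fun t : ℝ => ‖g ((t:ℂ)*w)‖) volume 0 1 := by
      apply ContinuousOn.intervalIntegrable
      rwa [uIcc_of_le (by norm_num)]
    have hint1 : IntervalIntegrable (fun t : ℝ => ‖w * g ((t:ℂ)*w)‖) volume 0 1 := by
      apply ContinuousOn.intervalIntegrable
      rw [uIcc_of_le (by norm_num)]
      exact continuous_norm.comp_continuousOn (continuousOn_const.mul hgc)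
    have h1 : ‖Volterra g w‖ ≤ ∫ t in (0:ℝ)..1, ‖g ((t:ℂ) * w)‖ := by
      rw [show Volterra g w = ∫ t in (0:ℝ)..1, w * g ((t:ℂ)*w) from rfl]
      calc ‖∫ t in (0:ℝ)..1, w * g ((t:ℂ)*w)‖ ≤ ∫ t in (0:ℝ)..1, ‖w * g ((t:ℂ)*w)‖ :=
            intervalIntegral.norm_integral_le_integral_norm
              (f := fun t : ℝ => w * g ((t:ℂ)*w)) (by norm_num)
        _ ≤ ∫ t in (0:ℝ)..1, ‖g ((t:ℂ) * w)‖ := by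
            apply intervalIntegral.integral_mono_on (by norm_num) hint1 hint2
            intro t ht
            rw [norm_mul]
            calc ‖w‖ * ‖g ((t:ℂ)*w)‖ ≤ 1 * ‖g ((t:ℂ)*w)‖ := by
                  apply mul_le_mul_of_nonneg_right _ (norm_nonneg _)
                  rw [show ‖w‖ = ‖w‖ from rfl, hwnorm]
                  exact hr.2.le
              _ = _ := by rw [one_mul]
    have hnn : 0 ≤ ∫ t in (0:ℝ)..1, ‖g ((t:ℂ)*w)‖ :=
      intervalIntegral.integral_nonneg (by norm_num) (fun t _ => norm_nonneg _)
    have hmeas : AEMeasurable (fun t : ℝ => ENNReal.ofReal (‖g ((t:ℂ)*w)‖))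
        (volume.restrict (Ioc (0:ℝ) 1)) := by
      apply ENNReal.measurable_ofReal.comp_aemeasurable
      exact ((habs.mono Ioc_subset_Icc_self).aemeasurable measurableSet_Ioc)
    calc ENNReal.ofReal (‖Volterra g w‖ ^ p)
        ≤ ENNReal.ofReal ((∫ t in (0:ℝ)..1, ‖g ((t:ℂ)*w)‖) ^ p) :=
          ENNReal.ofReal_le_ofReal (Real.rpow_le_rpow (norm_nonneg _) h1 hp0.le)
      _ = (ENNReal.ofReal (∫ t in (0:ℝ)..1, ‖g ((t:ℂ)*w)‖)) ^ p :=
          aux_ofReal_rpow hnn hp0.le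
      _ = (∫⁻ t in Ioc (0:ℝ) 1, ENNReal.ofReal (‖g ((t:ℂ)*w)‖)) ^ p := by
          rw [intervalIntegral.integral_of_le (by norm_num : (0:ℝ) ≤ 1)]
          rw [ofReal_integral_eq_lintegral_ofReal
            ((habs.integrableOn_Icc).mono_set Ioc_subset_Icc_self)
            (Filter.Eventually.of_forall (fun t => norm_nonneg _))]
      _ ≤ ∫⁻ t in Ioc (0:ℝ) 1, (ENNReal.ofReal (‖g ((t:ℂ)*w)‖)) ^ p :=
          aux_jensen hp hmeas
      _ = ∫⁻ t in Ioc (0:ℝ) 1, G θ t := rfl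
  -- measurability for the swap
  have hswapmeas : AEMeasurable (fun q : ℝ × ℝ => G q.1 q.2)
      ((volume.restrict (Ioc (0:ℝ) (2*Real.pi))).prod (volume.restrict (Ioc (0:ℝ) 1))) := by
    rw [Measure.prod_restrict]
    have hgm : AEMeasurable (fun q : ℝ × ℝ =>
        g ((q.2:ℂ) * (((r:ℝ):ℂ) * Complex.exp (q.1 * Complex.I))))
        (volume.restrict ((Ioc (0:ℝ) (2*Real.pi)) ×ˢ (Ioc (0:ℝ) 1))) := by
      apply ContinuousOn.aemeasurable _ (measurableSet_Ioc.prod measurableSet_Ioc)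
      apply hg.comp (by fun_prop)
      rintro ⟨θ, t⟩ ⟨hθ, ht⟩
      exact hmem t θ ht.1.le ht.2
    exact ((ENNReal.measurable_ofReal.comp continuous_norm.measurable).comp_aemeasurable
      hgm).pow_const p
  have hswap : (∫⁻ θ in Ioc (0:ℝ) (2*Real.pi), ∫⁻ t in Ioc (0:ℝ) 1, G θ t)
      = ∫⁻ t in Ioc (0:ℝ) 1, ∫⁻ θ in Ioc (0:ℝ) (2*Real.pi), G θ t :=
    lintegral_lintegral_swap hswapmeas
  -- the bound for each slice
  have stepC : ∀ t ∈ Ioc (0:ℝ) 1, (∫⁻ θ in Ioc (0:ℝ) (2*Real.pi), G θ t) ≤ H ^ p * C := by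
    intro t ht
    have hs : t * r ∈ Ioo (0:ℝ) 1 :=
      ⟨mul_pos ht.1 hr.1, lt_of_le_of_lt (by nlinarith [hr.1.le, hr.2.le, ht.2, ht.1.le]) hr.2⟩
    have hrw : (∫⁻ θ in Ioc (0:ℝ) (2*Real.pi), G θ t)
        = ∫⁻ θ in Ioc (0:ℝ) (2*Real.pi),
            ENNReal.ofReal (‖g (((t*r:ℝ):ℂ) * Complex.exp (θ * Complex.I))‖ ^ p) := by
      apply lintegral_congr
      intro θ
      rw [hG]
      simp only
      rw [← aux_ofReal_rpow (norm_nonneg _) hp0.le]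
      congr 3
      push_cast
      ring
    have hterm : ((∫⁻ θ in Ioc (0:ℝ) (2*Real.pi),
        ENNReal.ofReal (‖g (((t*r:ℝ):ℂ) * Complex.exp (θ * Complex.I))‖ ^ p)) / C)
          ^ (1/p) ≤ H := by
      rw [hH, hardyNorm]
      exact le_iSup_of_le ⟨t*r, hs⟩ le_rfl
    have h2 : (∫⁻ θ in Ioc (0:ℝ) (2*Real.pi),
        ENNReal.ofReal (‖g (((t*r:ℝ):ℂ) * Complex.exp (θ * Complex.I))‖ ^ p)) / C
          ≤ H ^ p := by
      have := ENNReal.rpow_le_rpow hterm hp0.le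
      rwa [← ENNReal.rpow_mul, one_div_mul_cancel hp0.ne', ENNReal.rpow_one] at this
    rw [hrw]
    rw [ENNReal.div_le_iff hC0 hCt] at h2
    exact h2
  have stepD : (∫⁻ t in Ioc (0:ℝ) 1, ∫⁻ θ in Ioc (0:ℝ) (2*Real.pi), G θ t) ≤ H ^ p * C := by
    calc (∫⁻ t in Ioc (0:ℝ) 1, ∫⁻ θ in Ioc (0:ℝ) (2*Real.pi), G θ t)
        ≤ ∫⁻ _ in Ioc (0:ℝ) 1, H ^ p * C := by
          apply lintegral_mono_ae
          filter_upwards [ae_restrict_mem measurableSet_Ioc] with t ht using stepC t ht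
      _ = H ^ p * C := by
          rw [lintegral_const, Measure.restrict_apply MeasurableSet.univ, univ_inter,
            Real.volume_Ioc]
          norm_num
  calc ((∫⁻ θ in Ioc (0:ℝ) (2*Real.pi),
      ENNReal.ofReal (‖Volterra g ((r:ℝ) * Complex.exp (θ * Complex.I))‖ ^ p)) / C)
        ^ (1/p)
      ≤ ((H ^ p * C) / C) ^ (1/p) := by
        apply ENNReal.rpow_le_rpow _ (by positivity)
        apply ENNReal.div_le_div_right
        calc _ ≤ ∫⁻ θ in Ioc (0:ℝ) (2*Real.pi), ∫⁻ t in Ioc (0:ℝ) 1, G θ t :=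
              lintegral_mono stepA
          _ = _ := hswap
          _ ≤ H ^ p * C := stepD
    _ = (H ^ p) ^ (1/p) := by rw [mul_div_assoc, ENNReal.div_self hC0 hCt, mul_one]
    _ = H := by rw [← ENNReal.rpow_mul, mul_one_div_cancel hp0.ne', ENNReal.rpow_one]


lemma aux_vop_congr {n : ℕ} {a b : ℂ → ℂ} (h : EqOn a b (ball (0:ℂ) 1)) {z : ℂ}
    (hz : z ∈ ball (0:ℂ) 1) : Vop n a z = Vop n b z := by
  unfold Vop
  congr 1
  apply intervalIntegral.integral_congr
  intro t ht
  rw [uIcc_of_le (by norm_num)] at ht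
  simp only
  rw [h (aux_mem_ball hz ht.1 ht.2)]

theorem shift_similar_to_T (n : ℕ) (p : ℝ) (hn : 1 ≤ n) (hp : 1 ≤ p)
    (f : ℂ → ℂ) (hf : MemS0 n p f) :
    MemS0 n p (fun w => w * f w) ∧
    ∀ z ∈ Metric.ball (0:ℂ) 1,
      z * f z =
        Vop n (fun w => w * iteratedDeriv n f w +
          (n:ℂ) * Volterra (iteratedDeriv n f) w) z := by
  obtain ⟨⟨hdiff, hnorm⟩, hvanish⟩ := hf
  obtain ⟨k, rfl⟩ : ∃ k, n = k + 1 := ⟨n-1, (Nat.succ_pred_eq_of_pos hn).symm⟩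
  set g := iteratedDeriv (k+1) f with hgdef
  set F := iteratedDeriv k f with hFdef
  have hF0 : F 0 = 0 := hvanish k (Nat.lt_succ_self k)
  have hFderiv : ∀ w ∈ ball (0:ℂ) 1, HasDerivAt F (g w) w :=
    fun w hw => aux_hasDerivAt hdiff k hw
  have hgcont : ContinuousOn g (ball 0 1) := aux_contOn hdiff (k+1)
  have hFcont : ContinuousOn F (ball 0 1) := aux_contOn hdiff k
  have hFvolt : ∀ w ∈ ball (0:ℂ) 1, Volterra g w = F w := by
    intro w hw
    rw [aux_volterra_eq hw hFderiv hgcont, hF0, sub_zero]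
  have hleib := aux_leibniz hdiff
  have hdiff2 : DifferentiableOn ℂ (fun w : ℂ => w * f w) (ball 0 1) :=
    differentiableOn_id.mul hdiff
  have hvan2 : ∀ m < k+1, iteratedDeriv m (fun w : ℂ => w * f w) 0 = 0 := by
    intro m hm
    match m, hm with
    | 0, _ => simp
    | (j+1), hm =>
      rw [hleib j 0 (by simp), hvanish j (by omega)]
      simp
  have heq : EqOn (iteratedDeriv (k+1) (fun w : ℂ => w * f w))
      (fun w => w * g w + ((k:ℂ)+1) * F w) (ball (0:ℂ) 1) := fun w hw => hleib k w hw
  have hFle : hardyNorm p F ≤ hardyNorm p g := by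
    rw [← aux_hardy_congr (fun w hw => hFvolt w hw)]
    exact aux_hardy_volterra hp hgcont
  have hnorm2 : hardyNorm p (iteratedDeriv (k+1) fun w : ℂ => w * f w) < ⊤ := by
    rw [aux_hardy_congr heq]
    have ha : ContinuousOn (fun w : ℂ => w * g w) (ball 0 1) := continuousOn_id.mul hgcont
    have hb : ContinuousOn (fun w : ℂ => ((k:ℂ)+1) * F w) (ball 0 1) :=
      continuousOn_const.mul hFcont
    calc hardyNorm p (fun w => w * g w + ((k:ℂ)+1) * F w)
        ≤ hardyNorm p (fun w => w * g w) + hardyNorm p (fun w => ((k:ℂ)+1) * F w) :=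
          aux_hardy_add_le hp ha hb
      _ ≤ hardyNorm p g + ENNReal.ofReal (‖(k:ℂ)+1‖) * hardyNorm p F := by
          apply add_le_add
          · apply aux_hardy_mono hp
            intro z hz
            rw [norm_mul]
            calc ‖z‖ * ‖g z‖ ≤ 1 * ‖g z‖ := by
                  apply mul_le_mul_of_nonneg_right _ (norm_nonneg _)
                  have := mem_ball_iff_norm.1 hz
                  simp only [sub_zero] at this
                  exact le_of_lt this
              _ = ‖g z‖ := one_mul _
          · exact aux_hardy_const_mul hp _ F
      _ < ⊤ := by
          apply ENNReal.add_lt_top.2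
          exact ⟨hnorm, ENNReal.mul_lt_top ENNReal.ofReal_lt_top (lt_of_le_of_lt hFle hnorm)⟩
  refine ⟨⟨⟨hdiff2, hnorm2⟩, hvan2⟩, ?_⟩
  intro z hz
  have heqn : EqOn (fun w => w * iteratedDeriv (k+1) f w +
      ((k+1 : ℕ):ℂ) * Volterra (iteratedDeriv (k+1) f) w)
      (iteratedDeriv (k+1) (fun w : ℂ => w * f w)) (ball (0:ℂ) 1) := by
    intro w hw
    simp only
    rw [hFvolt w hw, heq hw]
    push_cast
    ring
  have hzf := aux_vop_eq hdiff2 (k+1) (by omega) hvan2 hz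
  calc z * f z = (fun w : ℂ => w * f w) z := rfl
    _ = Vop (k+1) (iteratedDeriv (k+1) (fun w : ℂ => w * f w)) z := hzf
    _ = _ := (aux_vop_congr heqn hz).symm
end

section
/- Let n ≥ 1, 1 ≤ p < ∞, and let T = M_z + n T_z on H^p. A closed subspace ℳ ⊆ H^p is invariant under T if and only if ℳ = (d^n/dz^n)(𝒥) for some closed M_z-invariant subspace 𝒥 of S_{n,0}^p. -/
open MeasureTheory Metric Set Filter

-- basic analyticity helpers
lemma iterDiff {f : ℂ → ℂ} (hf : DifferentiableOn ℂ f (Metric.ball 0 1)) (k : ℕ) :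
    DifferentiableOn ℂ (iteratedDeriv k f) (Metric.ball 0 1) := by
  induction k with
  | zero => simpa using hf
  | succ k ih =>
    rw [iteratedDeriv_succ]
    exact ((ih.analyticOnNhd isOpen_ball).deriv).differentiableOn

lemma iterDiffAt {f : ℂ → ℂ} (hf : DifferentiableOn ℂ f (Metric.ball 0 1)) (k : ℕ)
    {x : ℂ} (hx : x ∈ Metric.ball (0:ℂ) 1) : DifferentiableAt ℂ (iteratedDeriv k f) x :=
  (iterDiff hf k).differentiableAt (isOpen_ball.mem_nhds hx)

lemma eqOn_iteratedDeriv {f g : ℂ → ℂ} {s : Set ℂ} (hs : IsOpen s) (h : Set.EqOn f g s) (k : ℕ) :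
    Set.EqOn (iteratedDeriv k f) (iteratedDeriv k g) s := by
  induction k with
  | zero => simpa using h
  | succ k ih =>
    intro x hx
    rw [iteratedDeriv_succ, iteratedDeriv_succ]
    exact Filter.EventuallyEq.deriv_eq (Filter.eventually_of_mem (hs.mem_nhds hx) fun y hy => ih hy)

lemma iteratedDeriv_add_ball {f g : ℂ → ℂ} (hf : DifferentiableOn ℂ f (Metric.ball 0 1))
    (hg : DifferentiableOn ℂ g (Metric.ball 0 1)) (k : ℕ) :
    ∀ x ∈ Metric.ball (0:ℂ) 1,
      iteratedDeriv k (fun z => f z + g z) x = iteratedDeriv k f x + iteratedDeriv k g x := by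
  induction k with
  | zero => intro x _; simp
  | succ k ih =>
    intro x hx
    rw [iteratedDeriv_succ, iteratedDeriv_succ, iteratedDeriv_succ]
    have h1 : deriv (iteratedDeriv k (fun z => f z + g z)) x
        = deriv (fun z => iteratedDeriv k f z + iteratedDeriv k g z) x :=
      Filter.EventuallyEq.deriv_eq (Filter.eventually_of_mem (isOpen_ball.mem_nhds hx)
        fun y hy => ih y hy)
    rw [h1, deriv_fun_add (iterDiffAt hf k hx) (iterDiffAt hg k hx)]

lemma iteratedDeriv_sub_ball {f g : ℂ → ℂ} (hf : DifferentiableOn ℂ f (Metric.ball 0 1))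
    (hg : DifferentiableOn ℂ g (Metric.ball 0 1)) (k : ℕ) :
    ∀ x ∈ Metric.ball (0:ℂ) 1,
      iteratedDeriv k (fun z => f z - g z) x = iteratedDeriv k f x - iteratedDeriv k g x := by
  induction k with
  | zero => intro x _; simp
  | succ k ih =>
    intro x hx
    rw [iteratedDeriv_succ, iteratedDeriv_succ, iteratedDeriv_succ]
    have h1 : deriv (iteratedDeriv k (fun z => f z - g z)) x
        = deriv (fun z => iteratedDeriv k f z - iteratedDeriv k g z) x :=
      Filter.EventuallyEq.deriv_eq (Filter.eventually_of_mem (isOpen_ball.mem_nhds hx)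
        fun y hy => ih y hy)
    rw [h1, deriv_fun_sub (iterDiffAt hf k hx) (iterDiffAt hg k hx)]

lemma iteratedDeriv_cmul (c : ℂ) (f : ℂ → ℂ) (k : ℕ) :
    iteratedDeriv k (fun z => c * f z) = fun x => c * iteratedDeriv k f x := by
  induction k with
  | zero => simp [iteratedDeriv_zero]
  | succ k ih =>
    rw [iteratedDeriv_succ, ih, iteratedDeriv_succ]
    exact deriv_const_mul_field' c

lemma leibniz_ball {f : ℂ → ℂ} (hf : DifferentiableOn ℂ f (Metric.ball 0 1)) (k : ℕ) :
    ∀ x ∈ Metric.ball (0:ℂ) 1,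
      iteratedDeriv (k+1) (fun z => z * f z) x
        = x * iteratedDeriv (k+1) f x + (k+1 : ℂ) * iteratedDeriv k f x := by
  induction k with
  | zero =>
    intro x hx
    have h := ((hasDerivAt_id x).mul ((hf.differentiableAt
      (isOpen_ball.mem_nhds hx)).hasDerivAt))
    simp only [id_eq] at h
    rw [iteratedDeriv_one, iteratedDeriv_one, iteratedDeriv_zero, (show HasDerivAt (fun z => z * f z) _ x from h).deriv]
    push_cast
    ring
  | succ k ih =>
    intro x hx
    have e1 : iteratedDeriv (k+1+1) (fun z => z * f z) x
        = deriv (fun z => z * iteratedDeriv (k+1) f z + (k+1 : ℂ) * iteratedDeriv k f z) x := by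
      rw [iteratedDeriv_succ]
      exact Filter.EventuallyEq.deriv_eq (Filter.eventually_of_mem (isOpen_ball.mem_nhds hx)
        fun y hy => ih y hy)
    have ha := (hasDerivAt_id x).mul (iterDiffAt hf (k+1) hx).hasDerivAt
    simp only [id_eq] at ha
    have hb := ((iterDiffAt hf k hx).hasDerivAt.const_mul ((k+1 : ℂ)))
    have h2 := (ha.add hb).deriv
    rw [e1, (show HasDerivAt (fun z => z * iteratedDeriv (k+1) f z + (k+1 : ℂ) * iteratedDeriv k f z) _ x from ha.add hb).deriv]
    have c1 := congrFun (iteratedDeriv_succ (n := k+1) (f := f)) x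
    have c2 := congrFun (iteratedDeriv_succ (n := k) (f := f)) x
    rw [← c1, ← c2]
    push_cast
    ring

lemma hardyNorm_congr {p : ℝ} {f g : ℂ → ℂ} (h : Set.EqOn f g (Metric.ball (0:ℂ) 1)) :
    hardyNorm p f = hardyNorm p g := by
  unfold hardyNorm
  congr 1
  funext r
  congr 2
  apply lintegral_congr
  intro θ
  have hmem : (r:ℝ) * Complex.exp (θ * Complex.I) ∈ Metric.ball (0:ℂ) 1 := by
    simp only [Metric.mem_ball, dist_zero_right, norm_mul, Complex.norm_exp_ofReal_mul_I,
      Complex.norm_real, Real.norm_eq_abs, mul_one]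
    rw [abs_of_pos r.2.1]
    · exact r.2.2
  rw [h hmem]

lemma hardyNorm_le_snNorm (n : ℕ) (p : ℝ) (f : ℂ → ℂ) :
    hardyNorm p (iteratedDeriv n f) ≤ snNorm n p f := by
  induction n generalizing f with
  | zero => simp [snNorm, iteratedDeriv_zero]
  | succ n ih =>
    rw [iteratedDeriv_succ']
    calc hardyNorm p (iteratedDeriv n (deriv f)) ≤ snNorm n p (deriv f) := ih _
    _ ≤ snNorm (n+1) p f := le_add_self

lemma hardyNorm_zero {p : ℝ} (hp : 1 ≤ p) : hardyNorm p (fun _ => (0:ℂ)) = 0 := by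
  unfold hardyNorm
  have hp0 : p ≠ 0 := by linarith
  simp [Real.zero_rpow hp0, ENNReal.zero_rpow_of_pos (by positivity : (0:ℝ) < 1/p)]
  intro a _ _
  linarith

lemma hasDerivAt_ofReal_mul (z : ℂ) (t : ℝ) : HasDerivAt (fun s : ℝ => (s:ℂ) * z) z t := by
  have h := (Complex.ofRealCLM.hasDerivAt (x := t)).mul_const z
  simpa using h

lemma segment_mem {z : ℂ} (hz : z ∈ Metric.ball (0:ℂ) 1) {t : ℝ} (ht0 : 0 ≤ t) (ht1 : t ≤ 1) :
    (t:ℂ) * z ∈ Metric.ball (0:ℂ) 1 := by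
  simp only [Metric.mem_ball, dist_zero_right] at *
  rw [norm_mul, Complex.norm_real, Real.norm_eq_abs, abs_of_nonneg ht0]
  nlinarith [norm_nonneg z]

lemma deriv_continuousOn {g : ℂ → ℂ} (hg : DifferentiableOn ℂ g (Metric.ball 0 1)) :
    ContinuousOn (deriv g) (Metric.ball (0:ℂ) 1) :=
  ((hg.analyticOnNhd isOpen_ball).deriv).differentiableOn.continuousOn

lemma ftc_ball {h : ℂ → ℂ} (hd : DifferentiableOn ℂ h (Metric.ball 0 1)) (h0 : h 0 = 0)
    {z : ℂ} (hz : z ∈ Metric.ball (0:ℂ) 1) :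
    h z = ∫ t in (0:ℝ)..1, z * deriv h ((t:ℂ) * z) := by
  have key : ∀ t ∈ Set.uIcc (0:ℝ) 1,
      HasDerivAt (fun s : ℝ => h ((s:ℂ) * z)) (z * deriv h ((t:ℂ) * z)) t := by
    intro t ht
    rw [Set.uIcc_of_le zero_le_one] at ht
    have hmem := segment_mem hz ht.1 ht.2
    have houter : HasDerivAt h (deriv h ((t:ℂ)*z)) ((t:ℂ)*z) :=
      (hd.differentiableAt (isOpen_ball.mem_nhds hmem)).hasDerivAt
    have := HasDerivAt.comp t houter (hasDerivAt_ofReal_mul z t)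
    simpa [mul_comm, Function.comp_def] using this
  have hint : IntervalIntegrable (fun t : ℝ => z * deriv h ((t:ℂ) * z)) volume 0 1 := by
    apply ContinuousOn.intervalIntegrable
    rw [Set.uIcc_of_le zero_le_one]
    apply ContinuousOn.mul continuousOn_const
    apply (deriv_continuousOn hd).comp
    · exact (Continuous.comp Complex.continuous_ofReal continuous_id).continuousOn.mul
        continuousOn_const
    · intro t ht
      exact segment_mem hz ht.1 ht.2
  have := intervalIntegral.integral_eq_sub_of_hasDerivAt key hint
  rw [this]
  simp [h0]

lemma exists_primitive {g : ℂ → ℂ} (hg : DifferentiableOn ℂ g (Metric.ball 0 1)) :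
    ∃ F : ℂ → ℂ, F 0 = 0 ∧ ∀ z ∈ Metric.ball (0:ℂ) 1, HasDerivAt F (g z) z := by
  classical
  set F : ℂ → ℂ := fun z => ∫ t in (0:ℝ)..1, z * g ((t:ℂ) * z) with hF
  refine ⟨F, by simp [hF], ?_⟩
  intro z₀ hz₀
  rw [Metric.mem_ball, dist_zero_right] at hz₀
  set r : ℝ := (1 + ‖z₀‖) / 2 with hr
  have hr1 : r < 1 := by rw [hr]; linarith
  have hrpos : 0 < r := by rw [hr]; positivity
  have hz₀r : ‖z₀‖ < r := by rw [hr]; linarith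
  set ε : ℝ := (1 - ‖z₀‖) / 2 with hε
  have hεpos : 0 < ε := by rw [hε]; linarith
  have hball : ∀ x ∈ Metric.ball z₀ ε, ‖x‖ ≤ r := by
    intro x hx
    rw [Metric.mem_ball] at hx
    have := norm_sub_norm_le x z₀
    rw [← dist_eq_norm] at this
    rw [hr]; rw [hε] at hx; linarith
  have hsub : Metric.closedBall (0:ℂ) r ⊆ Metric.ball 0 1 := by
    intro x hx
    rw [Metric.mem_closedBall, dist_zero_right] at hx
    rw [Metric.mem_ball, dist_zero_right]
    linarith
  have hgc : ContinuousOn g (Metric.closedBall (0:ℂ) r) := (hg.continuousOn).mono hsub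
  have hg'c : ContinuousOn (deriv g) (Metric.closedBall (0:ℂ) r) :=
    (deriv_continuousOn hg).mono hsub
  obtain ⟨C₁, hC₁⟩ := (isCompact_closedBall (0:ℂ) r).exists_bound_of_continuousOn hgc
  obtain ⟨C₂, hC₂⟩ := (isCompact_closedBall (0:ℂ) r).exists_bound_of_continuousOn hg'c
  have hC₁0 : 0 ≤ C₁ := le_trans (norm_nonneg _) (hC₁ 0 (by simp [hrpos.le]))
  have hC₂0 : 0 ≤ C₂ := le_trans (norm_nonneg _) (hC₂ 0 (by simp [hrpos.le]))
  set μ : Measure ℝ := volume.restrict (Set.Ioc (0:ℝ) 1) with hμ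
  set G : ℂ → ℝ → ℂ := fun x t => x * g ((t:ℂ) * x) with hG
  set G' : ℂ → ℝ → ℂ := fun x t => g ((t:ℂ) * x) + x * ((t:ℂ) * deriv g ((t:ℂ) * x)) with hG'
  -- membership of segments
  have hseg : ∀ (x : ℂ), ‖x‖ ≤ r → ∀ t ∈ Set.Icc (0:ℝ) 1, (t:ℂ) * x ∈ Metric.closedBall (0:ℂ) r := by
    intro x hx t ht
    rw [Metric.mem_closedBall, dist_zero_right, norm_mul, Complex.norm_real, Real.norm_eq_abs,
      abs_of_nonneg ht.1]
    calc t * ‖x‖ ≤ 1 * r := mul_le_mul ht.2 hx (norm_nonneg x) zero_le_one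
    _ = r := one_mul r
  -- continuity giving measurability
  have hcontG : ∀ (x : ℂ), ‖x‖ ≤ r → ContinuousOn (G x) (Set.Icc (0:ℝ) 1) := by
    intro x hx
    apply ContinuousOn.mul continuousOn_const
    apply hgc.comp
    · exact ((Complex.continuous_ofReal.comp continuous_id).continuousOn).mul continuousOn_const
    · intro t ht; exact hseg x hx t ht
  have hcontG' : ∀ (x : ℂ), ‖x‖ ≤ r → ContinuousOn (G' x) (Set.Icc (0:ℝ) 1) := by
    intro x hx
    apply ContinuousOn.add
    · apply hgc.comp
      · exact ((Complex.continuous_ofReal.comp continuous_id).continuousOn).mul continuousOn_const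
      · intro t ht; exact hseg x hx t ht
    · apply ContinuousOn.mul continuousOn_const
      apply ContinuousOn.mul
      · exact (Complex.continuous_ofReal.comp continuous_id).continuousOn
      · apply hg'c.comp
        · exact ((Complex.continuous_ofReal.comp continuous_id).continuousOn).mul continuousOn_const
        · intro t ht; exact hseg x hx t ht
  have main := hasDerivAt_integral_of_dominated_loc_of_deriv_le (μ := μ) (x₀ := z₀)
    (F := G) (F' := G') (bound := fun _ => C₁ + r * C₂) (Metric.ball_mem_nhds z₀ hεpos)
    (Filter.eventually_of_mem (Metric.ball_mem_nhds z₀ hεpos) ?hmeas)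
    ?hint ?hmeas' ?hbd ?hbint ?hdiff
  case hmeas =>
    intro x hx
    exact (((hcontG x (hball x hx)).mono Set.Ioc_subset_Icc_self).aestronglyMeasurable
      measurableSet_Ioc)
  case hint =>
    exact ((hcontG z₀ hz₀r.le).integrableOn_Icc).mono_set Set.Ioc_subset_Icc_self
  case hmeas' =>
    exact (((hcontG' z₀ hz₀r.le).mono Set.Ioc_subset_Icc_self).aestronglyMeasurable
      measurableSet_Ioc)
  case hbd =>
    rw [hμ, ae_restrict_iff' measurableSet_Ioc]
    apply Filter.Eventually.of_forall
    intro t ht x hx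
    have hxr := hball x hx
    have hmem := hseg x hxr t ⟨ht.1.le, ht.2⟩
    have h1 : ‖g ((t:ℂ)*x)‖ ≤ C₁ := hC₁ _ hmem
    have h2 : ‖deriv g ((t:ℂ)*x)‖ ≤ C₂ := hC₂ _ hmem
    calc ‖G' x t‖ ≤ ‖g ((t:ℂ)*x)‖ + ‖x * ((t:ℂ) * deriv g ((t:ℂ)*x))‖ := norm_add_le _ _
    _ ≤ C₁ + r * C₂ := by
        rw [norm_mul, norm_mul, Complex.norm_real, Real.norm_eq_abs, abs_of_nonneg ht.1.le]
        have h3 : ‖x‖ * (t * ‖deriv g ((t:ℂ)*x)‖) ≤ r * (1 * C₂) := by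
          apply mul_le_mul hxr (mul_le_mul ht.2 h2 (norm_nonneg _) zero_le_one)
            (mul_nonneg ht.1.le (norm_nonneg _)) hrpos.le
        rw [one_mul] at h3
        linarith
  case hbint =>
    have hbi : IntegrableOn (fun _ : ℝ => C₁ + r * C₂) (Set.Ioc (0:ℝ) 1) volume := by
      refine integrableOn_const ?_
      simp [Real.volume_Ioc]
    exact hbi
  case hdiff =>
    rw [hμ, ae_restrict_iff' measurableSet_Ioc]
    apply Filter.Eventually.of_forall
    intro t ht x hx
    have hxr := hball x hx
    have hmem : (t:ℂ) * x ∈ Metric.ball (0:ℂ) 1 := hsub (hseg x hxr t ⟨ht.1.le, ht.2⟩)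
    have houter : HasDerivAt g (deriv g ((t:ℂ)*x)) ((t:ℂ)*x) :=
      (hg.differentiableAt (isOpen_ball.mem_nhds hmem)).hasDerivAt
    have hinner : HasDerivAt (fun y : ℂ => (t:ℂ) * y) ((t:ℂ)) x := by
      simpa using (hasDerivAt_id x).const_mul ((t:ℂ))
    have hcomp := HasDerivAt.comp x houter hinner
    have := (hasDerivAt_id x).mul hcomp
    simp only [id_eq, one_mul] at this
    convert this using 1
    · rfl
    show g ((t:ℂ) * x) + x * ((t:ℂ) * deriv g ((t:ℂ) * x)) = g ((t:ℂ) * x) + x * (deriv g ((t:ℂ) * x) * (t:ℂ))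
    ring
    rfl
  -- now identify
  obtain ⟨-, hder⟩ := main
  have hFeq : F = fun x => ∫ t, G x t ∂μ := by
    funext x
    rw [hF, hμ, hG]
    exact intervalIntegral.integral_of_le zero_le_one
  rw [hFeq]
  -- compute the integral of G' z₀
  have hψ : ∀ t ∈ Set.uIcc (0:ℝ) 1,
      HasDerivAt (fun s : ℝ => (s:ℂ) * g ((s:ℂ) * z₀)) (G' z₀ t) t := by
    intro t ht
    rw [Set.uIcc_of_le zero_le_one] at ht
    have hmem : (t:ℂ) * z₀ ∈ Metric.ball (0:ℂ) 1 :=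
      hsub (hseg z₀ hz₀r.le t ht)
    have houter : HasDerivAt g (deriv g ((t:ℂ)*z₀)) ((t:ℂ)*z₀) :=
      (hg.differentiableAt (isOpen_ball.mem_nhds hmem)).hasDerivAt
    have hcomp := HasDerivAt.comp t houter (hasDerivAt_ofReal_mul z₀ t)
    have := (hasDerivAt_ofReal_mul 1 t).mul hcomp
    simp only [mul_one] at this
    convert this using 1
    · rfl
    show g ((t:ℂ) * z₀) + z₀ * ((t:ℂ) * deriv g ((t:ℂ) * z₀)) = 1 * g ((t:ℂ) * z₀) + (t:ℂ) * (deriv g ((t:ℂ) * z₀) * z₀)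
    ring
    rfl
  have hintψ : IntervalIntegrable (fun t : ℝ => G' z₀ t) volume 0 1 := by
    apply ContinuousOn.intervalIntegrable
    rw [Set.uIcc_of_le zero_le_one]
    exact hcontG' z₀ hz₀r.le
  have hval := intervalIntegral.integral_eq_sub_of_hasDerivAt hψ hintψ
  have : (∫ t, G' z₀ t ∂μ) = g z₀ := by
    rw [hμ, ← intervalIntegral.integral_of_le zero_le_one, hval]
    simp
  rw [← this]
  exact hder

lemma exists_nth_primitive {g : ℂ → ℂ} (hg : DifferentiableOn ℂ g (Metric.ball 0 1)) (n : ℕ) :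
    ∃ f : ℂ → ℂ, DifferentiableOn ℂ f (Metric.ball 0 1) ∧
      (∀ m < n, iteratedDeriv m f 0 = 0) ∧
      Set.EqOn (iteratedDeriv n f) g (Metric.ball (0:ℂ) 1) := by
  induction n with
  | zero => exact ⟨g, hg, by simp, by simp [iteratedDeriv_zero, Set.EqOn]⟩
  | succ n ih =>
    obtain ⟨f₁, hf₁d, hf₁0, hf₁e⟩ := ih
    obtain ⟨F, hF0, hFd⟩ := exists_primitive hf₁d
    have hFdiff : DifferentiableOn ℂ F (Metric.ball 0 1) :=
      fun z hz => ((hFd z hz).differentiableAt).differentiableWithinAt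
    have hderiv : Set.EqOn (deriv F) f₁ (Metric.ball (0:ℂ) 1) := fun z hz => (hFd z hz).deriv
    have hiter : Set.EqOn (iteratedDeriv (n+1) F) g (Metric.ball (0:ℂ) 1) := by
      intro z hz
      rw [iteratedDeriv_succ']
      rw [eqOn_iteratedDeriv isOpen_ball hderiv n hz]
      exact hf₁e hz
    refine ⟨F, hFdiff, ?_, hiter⟩
    intro m hm
    match m with
    | 0 => simpa using hF0
    | (k+1) =>
      rw [iteratedDeriv_succ']
      have hb : (0:ℂ) ∈ Metric.ball (0:ℂ) 1 := Metric.mem_ball_self one_pos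
      rw [eqOn_iteratedDeriv isOpen_ball hderiv k hb]
      exact hf₁0 k (by omega)

lemma key_eq {f g : ℂ → ℂ} (hf : DifferentiableOn ℂ f (Metric.ball 0 1)) (m : ℕ)
    (h0 : iteratedDeriv m f 0 = 0)
    (hEq : Set.EqOn (iteratedDeriv (m+1) f) g (Metric.ball (0:ℂ) 1)) :
    Set.EqOn (iteratedDeriv (m+1) (fun z => z * f z))
      (fun z => z * g z + ((m:ℂ)+1) * Volterra g z) (Metric.ball (0:ℂ) 1) := by
  intro x hx
  have hL := leibniz_ball hf m x hx
  have hV : iteratedDeriv m f x = Volterra g x := by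
    rw [ftc_ball (iterDiff hf m) h0 hx]
    unfold Volterra
    apply intervalIntegral.integral_congr
    intro t ht
    rw [Set.uIcc_of_le zero_le_one] at ht
    have hmem := segment_mem hx ht.1 ht.2
    have c := congrFun (iteratedDeriv_succ (n := m) (f := f)) ((t:ℂ)*x)
    simp only [← c, hEq hmem]
  simp only [hL, hEq hx, hV]

lemma zf_diff {f : ℂ → ℂ} (hf : DifferentiableOn ℂ f (Metric.ball 0 1)) :
    DifferentiableOn ℂ (fun z => z * f z) (Metric.ball 0 1) :=
  DifferentiableOn.mul differentiableOn_id hf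

lemma iteratedDeriv_zero_fun (k : ℕ) : iteratedDeriv k (fun _ : ℂ => (0:ℂ)) = fun _ => 0 := by
  induction k with
  | zero => simp [iteratedDeriv_zero]
  | succ k ih => rw [iteratedDeriv_succ, ih]; funext x; simp

theorem invariant_subspaces_of_T (n : ℕ) (p : ℝ) (hn : 1 ≤ n) (hp : 1 ≤ p)
    (M : Set (ℂ → ℂ))
    (hM : ∀ g ∈ M, MemHp p g)
    (hzero : (fun _ => (0:ℂ)) ∈ M)
    (hadd : ∀ f g, f ∈ M → g ∈ M → (fun z => f z + g z) ∈ M)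
    (hsmul : ∀ (c : ℂ) f, f ∈ M → (fun z => c * f z) ∈ M)
    (hclosed : ∀ (F : ℕ → ℂ → ℂ) (g : ℂ → ℂ), (∀ k, F k ∈ M) → MemHp p g →
      Filter.Tendsto (fun k => hardyNorm p (fun z => F k z - g z)) Filter.atTop (nhds 0) →
      g ∈ M)
    (hagree : ∀ g g', g ∈ M → DifferentiableOn ℂ g' (Metric.ball 0 1) →
      Set.EqOn g g' (Metric.ball (0:ℂ) 1) → g' ∈ M) :
    (∀ g ∈ M, (fun z => z * g z + (n:ℂ) * Volterra g z) ∈ M) ↔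
      ∃ J : Set (ℂ → ℂ),
        (∀ f ∈ J, MemS0 n p f) ∧
        (fun _ => (0:ℂ)) ∈ J ∧
        (∀ f g, f ∈ J → g ∈ J → (fun z => f z + g z) ∈ J) ∧
        (∀ (c : ℂ) f, f ∈ J → (fun z => c * f z) ∈ J) ∧
        (∀ (F : ℕ → ℂ → ℂ) (f : ℂ → ℂ), (∀ k, F k ∈ J) → MemS0 n p f →
          Filter.Tendsto (fun k => snNorm n p (fun z => F k z - f z)) Filter.atTop (nhds 0) →
          f ∈ J) ∧
        (∀ f ∈ J, (fun z => z * f z) ∈ J) ∧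
        M = {g | ∃ f ∈ J, Set.EqOn (iteratedDeriv n f) g (Metric.ball (0:ℂ) 1)} := by
  obtain ⟨m, rfl⟩ : ∃ m, n = m + 1 := ⟨n - 1, (Nat.succ_pred_eq_of_pos hn).symm⟩
  have hb0 : (0:ℂ) ∈ Metric.ball (0:ℂ) 1 := Metric.mem_ball_self one_pos
  have hcast : ((m + 1 : ℕ) : ℂ) = (m : ℂ) + 1 := by push_cast; ring
  constructor
  · -- forward
    intro hT
    refine ⟨{f | MemS0 (m+1) p f ∧ iteratedDeriv (m+1) f ∈ M}, fun f hf => hf.1, ?_, ?_, ?_, ?_,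
      ?_, ?_⟩
    · -- zero
      refine ⟨⟨⟨differentiableOn_const 0, ?_⟩, ?_⟩, ?_⟩
      · rw [iteratedDeriv_zero_fun, hardyNorm_zero hp]; exact ENNReal.zero_lt_top
      · intro k _; rw [iteratedDeriv_zero_fun]
      · rw [iteratedDeriv_zero_fun]; exact hzero
    · -- add
      rintro f g ⟨⟨⟨hfd, -⟩, hf0⟩, hfM⟩ ⟨⟨⟨hgd, -⟩, hg0⟩, hgM⟩
      have hS : (fun z => iteratedDeriv (m+1) f z + iteratedDeriv (m+1) g z) ∈ M :=
        hadd _ _ hfM hgM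
      have hE : Set.EqOn (fun z => iteratedDeriv (m+1) f z + iteratedDeriv (m+1) g z)
          (iteratedDeriv (m+1) (fun z => f z + g z)) (Metric.ball (0:ℂ) 1) :=
        fun x hx => (iteratedDeriv_add_ball hfd hgd (m+1) x hx).symm
      have hsumd : DifferentiableOn ℂ (fun z => f z + g z) (Metric.ball 0 1) := hfd.add hgd
      have hMmem : iteratedDeriv (m+1) (fun z => f z + g z) ∈ M :=
        hagree _ _ hS (iterDiff hsumd (m+1)) hE
      refine ⟨⟨⟨hsumd, ?_⟩, ?_⟩, hMmem⟩
      · rw [hardyNorm_congr (fun x hx => (hE hx).symm)]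
        exact (hM _ hS).2
      · intro k hk
        rw [iteratedDeriv_add_ball hfd hgd k 0 hb0, hf0 k hk, hg0 k hk, add_zero]
    · -- smul
      rintro c f ⟨⟨⟨hfd, -⟩, hf0⟩, hfM⟩
      have hd : DifferentiableOn ℂ (fun z => c * f z) (Metric.ball 0 1) := hfd.const_smul c
      have hMmem : iteratedDeriv (m+1) (fun z => c * f z) ∈ M := by
        rw [iteratedDeriv_cmul]
        exact hsmul c _ hfM
      refine ⟨⟨⟨hd, ?_⟩, ?_⟩, hMmem⟩
      · rw [iteratedDeriv_cmul]
        exact (hM _ (hsmul c _ hfM)).2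
      · intro k hk
        rw [iteratedDeriv_cmul]
        simp [hf0 k hk]
    · -- closed
      intro F f hF hf htend
      have hfd := hf.1.1
      have hFM : iteratedDeriv (m+1) f ∈ M := by
        apply hclosed (fun k => iteratedDeriv (m+1) (F k)) _ (fun k => (hF k).2)
          ⟨iterDiff hfd (m+1), hf.1.2⟩
        apply tendsto_of_tendsto_of_tendsto_of_le_of_le tendsto_const_nhds htend
          (fun k => zero_le)
        intro k
        dsimp only
        have hFkd := (hF k).1.1.1
        have hE : Set.EqOn (iteratedDeriv (m+1) (fun z => F k z - f z))
            (fun z => iteratedDeriv (m+1) (F k) z - iteratedDeriv (m+1) f z)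
            (Metric.ball (0:ℂ) 1) :=
          fun x hx => iteratedDeriv_sub_ball hFkd hfd (m+1) x hx
        rw [← hardyNorm_congr hE]
        exact hardyNorm_le_snNorm (m+1) p _
      exact ⟨hf, hFM⟩
    · -- multiplication by z
      rintro f ⟨⟨⟨hfd, -⟩, hf0⟩, hfM⟩
      have hkey := key_eq hfd m (hf0 m (by omega)) (fun x _ => rfl)
      have hTg : (fun z => z * iteratedDeriv (m+1) f z
          + ((m+1 : ℕ) : ℂ) * Volterra (iteratedDeriv (m+1) f) z) ∈ M := hT _ hfM
      rw [hcast] at hTg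
      have hMmem : iteratedDeriv (m+1) (fun z => z * f z) ∈ M :=
        hagree _ _ hTg (iterDiff (zf_diff hfd) (m+1)) (fun x hx => (hkey hx).symm)
      refine ⟨⟨⟨zf_diff hfd, ?_⟩, ?_⟩, hMmem⟩
      · rw [hardyNorm_congr hkey]
        exact (hM _ hTg).2
      · intro k hk
        match k with
        | 0 => simp [iteratedDeriv_zero]
        | (j+1) =>
          rw [leibniz_ball hfd j 0 hb0, hf0 j (by omega), mul_zero, zero_mul, add_zero]
    · -- M = image
      ext g
      constructor
      · intro hg
        obtain ⟨f, hfdiff, hf0, hfe⟩ := exists_nth_primitive (hM g hg).1 (m+1)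
        refine ⟨f, ⟨⟨⟨hfdiff, ?_⟩, hf0⟩, hagree g _ hg (iterDiff hfdiff (m+1))
          (fun x hx => (hfe hx).symm)⟩, hfe⟩
        rw [hardyNorm_congr hfe]
        exact (hM g hg).2
      · rintro ⟨f, ⟨⟨⟨hfdiff, -⟩, -⟩, hfM⟩, hfe⟩
        exact hagree _ _ hfM ((iterDiff hfdiff (m+1)).congr fun x hx => (hfe hx).symm) hfe
  · -- backward
    rintro ⟨J, hJS0, -, -, -, -, hJz, hMeq⟩ g hg
    rw [hMeq] at hg
    obtain ⟨f, hfJ, hfe⟩ := hg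
    obtain ⟨⟨hfd, -⟩, hf0⟩ := hJS0 f hfJ
    have hkey := key_eq hfd m (hf0 m (by omega)) hfe
    rw [hMeq]
    refine ⟨fun z => z * f z, hJz f hfJ, ?_⟩
    rw [hcast]
    exact hkey
end
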